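/- arXiv:1705.05194 — 3 statements merged into one kernel-verified Lean document; each statement's English description precedes it below -/
import Mathlib

section
/- Fix d_*, k_* ∈ ℕ, r > 0 and R > 0, and set m_* = d_* k_*. For y ∈ ℝ^{d_*} let V(y) be a random vector in ℝ^{d_*} whose law has density x ↦ 𝔪_r^{−d_*} ∏_{k=1}^{d_*} ψ_r(|x_k − y_k|²) with respect to Lebesgue measure, and define Ṽ(y) ∈ ℝ^{m_*} by Ṽ(y)_l = V(y)_{j(l)}^{k(l)+1} − E(V(y)_{j(l)}^{k(l)+1}) for l ∈ {1,…,m_*}. Then there exists λ_R > 0 such that for every y ∈ ℝ^{d_*} with |y| ≤ R and every ξ ∈ ℝ^{m_*}: ⟨Cov(Ṽ(y)) ξ, ξ⟩ ≥ λ_R |ξ|². -/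
open MeasureTheory Real
open scoped ENNReal NNReal

noncomputable section

/-- `θ_r(t) = 1 − 1/(1 − (t/r − 1)²)`. -/
def thetaR (r t : ℝ) : ℝ := 1 - 1 / (1 - (t / r - 1) ^ 2)

/-- `ψ_r(t) = 1_{|t| ≤ r} + 1_{r < |t| ≤ 2r} e^{θ_r(|t|)}`. -/
def psiR (r t : ℝ) : ℝ :=
  if |t| ≤ r then 1 else if |t| ≤ 2 * r then Real.exp (thetaR r |t|) else 0

/-- `𝔪_r = ∫_ℝ ψ_r(z²) dz`. -/
def mR (r : ℝ) : ℝ := ∫ z : ℝ, psiR r (z ^ 2)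

/-- `k(l) = ⌊(l−1)/d_*⌋` (0-indexed). -/
def kfun (d : ℕ) (l : ℕ) : ℕ := l / d

/-- `j(l)` (0-indexed). -/
def jfun (d : ℕ) (hd : 0 < d) (l : ℕ) : Fin d := ⟨l % d, Nat.mod_lt _ hd⟩

/-- The law of `V(y)`: density `𝔪_r^{−d_*} ∏_k ψ_r(|x_k − y_k|²)` w.r.t. Lebesgue
measure on `ℝ^{d_*}`. -/
def muV (d : ℕ) (r : ℝ) (y : Fin d → ℝ) : Measure (Fin d → ℝ) :=
  (volume : Measure (Fin d → ℝ)).withDensity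
    (fun x => ENNReal.ofReal ((∏ k, psiR r (|x k - y k| ^ 2)) / (mR r) ^ d))

lemma psiR_nonneg (r t : ℝ) : 0 ≤ psiR r t := by
  unfold psiR
  split_ifs <;> positivity

lemma psiR_le (r t : ℝ) (hr : 0 < r) : psiR r t ≤ Real.exp 1 := by
  unfold psiR
  split_ifs with h1 h2
  · exact Real.one_le_exp one_pos.le
  · apply Real.exp_le_exp.2
    unfold thetaR
    have h3 : 0 ≤ 1 - (|t| / r - 1) ^ 2 := by
      push_neg at h1
      have h4 : (|t| / r - 1) ^ 2 ≤ 1 := by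
        have h5 : 0 < |t| / r - 1 := by
          rw [sub_pos, lt_div_iff₀ hr]; linarith
        have h6 : |t| / r - 1 ≤ 1 := by
          rw [sub_le_iff_le_add, div_le_iff₀ hr]; linarith
        nlinarith
      linarith
    have : 0 ≤ 1 / (1 - (|t| / r - 1) ^ 2) := by positivity
    linarith
  · positivity

lemma psiR_eq_one {r t : ℝ} (h : |t| ≤ r) : psiR r t = 1 := if_pos h

lemma psiR_eq_zero {r t : ℝ} (h : 2 * r < |t|) : psiR r t = 0 := by
  unfold psiR
  rw [if_neg (by nlinarith [abs_nonneg t] : ¬ |t| ≤ r), if_neg (not_le.2 h)]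

lemma measurable_psiR (r : ℝ) : Measurable (psiR r) := by
  unfold psiR thetaR
  apply Measurable.ite (measurableSet_le measurable_abs measurable_const)
    measurable_const
  apply Measurable.ite (measurableSet_le measurable_abs measurable_const)
  · exact (Real.measurable_exp.comp (by fun_prop))
  · exact measurable_const

lemma psiR_continuousAt {r t₀ : ℝ} (hr : 0 < r) (h0 : 0 ≤ t₀) (h1 : t₀ ≠ r)
    (h2 : t₀ ≠ 2 * r) : ContinuousAt (psiR r) t₀ := by
  rcases lt_trichotomy t₀ r with hlt | heq | hgt
  · -- locally equal to 1
    have hev : ∀ᶠ t in nhds t₀, psiR r t = 1 := by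
      have : ∀ᶠ t in nhds t₀, |t| < r := by
        have : ContinuousAt (fun t : ℝ => |t|) t₀ := continuous_abs.continuousAt
        exact this.eventually_lt continuousAt_const (by rwa [abs_of_nonneg h0])
      filter_upwards [this] with t ht using psiR_eq_one ht.le
    exact continuousAt_const.congr (by filter_upwards [hev] with t ht using ht.symm)
  · exact absurd heq h1
  · rcases lt_trichotomy t₀ (2 * r) with hlt2 | heq2 | hgt2
    · -- locally exp (thetaR r |t|)
      have hev : ∀ᶠ t in nhds t₀, psiR r t = Real.exp (thetaR r |t|) := by
        have h3 : ∀ᶠ t in nhds t₀, r < |t| ∧ |t| < 2 * r := by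
          have hc : ContinuousAt (fun t : ℝ => |t|) t₀ := continuous_abs.continuousAt
          have e1 := continuousAt_const.eventually_lt hc (x₀ := t₀)
            (by rwa [abs_of_nonneg h0])
          have e2 := hc.eventually_lt continuousAt_const 
            (by rwa [abs_of_nonneg h0])
          exact e1.and e2
        filter_upwards [h3] with t ht
        unfold psiR
        rw [if_neg (not_le.2 ht.1), if_pos ht.2.le]
      have hca : ContinuousAt (fun t : ℝ => Real.exp (thetaR r |t|)) t₀ := by
        apply (Real.continuous_exp.continuousAt).comp
        unfold thetaR
        have habs : ContinuousAt (fun t : ℝ => |t|) t₀ := continuous_abs.continuousAt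
        apply ContinuousAt.sub continuousAt_const
        apply ContinuousAt.div continuousAt_const
        · fun_prop
        · have : |t₀| = t₀ := abs_of_nonneg h0
          rw [this]
          have hu1 : 0 < t₀ / r - 1 := by rw [sub_pos, lt_div_iff₀ hr]; linarith
          have hu2 : t₀ / r - 1 < 1 := by rw [sub_lt_iff_lt_add, div_lt_iff₀ hr]; linarith
          nlinarith
      exact hca.congr (by filter_upwards [hev] with t ht using ht.symm)
    · exact absurd heq2 h2
    · have hev : ∀ᶠ t in nhds t₀, psiR r t = 0 := by
        have : ∀ᶠ t in nhds t₀, 2 * r < |t| := by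
          have hc : ContinuousAt (fun t : ℝ => |t|) t₀ := continuous_abs.continuousAt
          exact continuousAt_const.eventually_lt hc (by rwa [abs_of_nonneg h0])
        filter_upwards [this] with t ht using psiR_eq_zero ht
      exact continuousAt_const.congr (by filter_upwards [hev] with t ht using ht.symm)


lemma integrable_psiR_sq {r : ℝ} (hr : 0 < r) :
    Integrable (fun z : ℝ => psiR r (z ^ 2)) := by
  apply Integrable.mono'
    (g := (Set.Icc (-Real.sqrt (2*r)) (Real.sqrt (2*r))).indicator
      (fun _ => Real.exp 1))
  · exact (IntegrableOn.integrable_indicator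
      (integrableOn_const (by rw [Real.volume_Icc]; exact ENNReal.ofReal_ne_top))
      measurableSet_Icc)
  · exact ((measurable_psiR r).comp (measurable_id.pow_const 2)).aestronglyMeasurable
  · refine Filter.Eventually.of_forall fun z => ?_
    rw [Real.norm_eq_abs, abs_of_nonneg (psiR_nonneg _ _)]
    by_cases hz : z ∈ Set.Icc (-Real.sqrt (2*r)) (Real.sqrt (2*r))
    · rw [Set.indicator_of_mem hz]
      exact psiR_le _ _ hr
    · rw [Set.indicator_of_notMem hz]
      have h2 : Real.sqrt (2*r) < |z| := by
        rcases abs_cases z with ⟨h, _⟩ | ⟨h, _⟩ <;>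
          simp only [Set.mem_Icc, not_and_or, not_le] at hz <;> rcases hz with h1 | h1 <;>
          linarith [Real.sqrt_nonneg (2*r)]
      have : 2 * r < z ^ 2 := by
        have h3 := Real.sq_sqrt (by linarith : (0:ℝ) ≤ 2*r)
        calc 2*r = Real.sqrt (2*r) ^ 2 := h3.symm
        _ < |z| ^ 2 := by nlinarith [Real.sqrt_nonneg (2*r)]
        _ = z ^ 2 := sq_abs z
      rw [psiR_eq_zero (by rwa [abs_of_nonneg (sq_nonneg z)])]

lemma mR_pos {r : ℝ} (hr : 0 < r) : 0 < mR r := by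
  have hsr : 0 < Real.sqrt r := Real.sqrt_pos.2 hr
  have hind : Integrable ((Set.Icc (-Real.sqrt r) (Real.sqrt r)).indicator
      (fun _ : ℝ => (1:ℝ))) := by
    exact (IntegrableOn.integrable_indicator
      (integrableOn_const (by rw [Real.volume_Icc]; exact ENNReal.ofReal_ne_top))
      measurableSet_Icc)
  have hle : ∀ z : ℝ, (Set.Icc (-Real.sqrt r) (Real.sqrt r)).indicator
      (fun _ : ℝ => (1:ℝ)) z ≤ psiR r (z ^ 2) := by
    intro z
    by_cases hz : z ∈ Set.Icc (-Real.sqrt r) (Real.sqrt r)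
    · rw [Set.indicator_of_mem hz]
      have : z ^ 2 ≤ r := by
        obtain ⟨h1, h2⟩ := hz
        nlinarith [Real.sq_sqrt hr.le]
      rw [psiR_eq_one (by rwa [abs_of_nonneg (sq_nonneg z)])]
    · rw [Set.indicator_of_notMem hz]; exact psiR_nonneg _ _
  have h1 : ∫ z : ℝ, (Set.Icc (-Real.sqrt r) (Real.sqrt r)).indicator
      (fun _ : ℝ => (1:ℝ)) z ≤ mR r :=
    integral_mono hind (integrable_psiR_sq hr) hle
  have h2 : ∫ z : ℝ, (Set.Icc (-Real.sqrt r) (Real.sqrt r)).indicator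
      (fun _ : ℝ => (1:ℝ)) z = 2 * Real.sqrt r := by
    rw [integral_indicator measurableSet_Icc]
    rw [setIntegral_const, measureReal_def, Real.volume_Icc, smul_eq_mul, mul_one,
      ENNReal.toReal_ofReal (by linarith)]
    ring
  linarith

/-- The density of `muV` as a real function. -/
def rho (d : ℕ) (r : ℝ) (y x : Fin d → ℝ) : ℝ :=
  (∏ k, psiR r (|x k - y k| ^ 2)) / (mR r) ^ d

lemma rho_nonneg (d : ℕ) (r : ℝ) (hr : 0 < r) (y x : Fin d → ℝ) :
    0 ≤ rho d r y x := by
  unfold rho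
  have := mR_pos hr
  have : (0:ℝ) ≤ ∏ k, psiR r (|x k - y k| ^ 2) :=
    Finset.prod_nonneg fun k _ => psiR_nonneg _ _
  positivity

lemma rho_le (d : ℕ) (r : ℝ) (hr : 0 < r) (y x : Fin d → ℝ) :
    rho d r y x ≤ Real.exp 1 ^ d / (mR r) ^ d := by
  unfold rho
  have hm := mR_pos hr
  have h1 : (∏ k, psiR r (|x k - y k| ^ 2)) ≤ Real.exp 1 ^ d := by
    calc (∏ k, psiR r (|x k - y k| ^ 2)) ≤ ∏ _k : Fin d, Real.exp 1 :=
          Finset.prod_le_prod (fun k _ => psiR_nonneg _ _) (fun k _ => psiR_le _ _ hr)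
    _ = Real.exp 1 ^ d := by rw [Finset.prod_const, Finset.card_univ, Fintype.card_fin]
  rw [div_le_div_iff_of_pos_right (by positivity)]
  exact h1

lemma measurable_rho (d : ℕ) (r : ℝ) (y : Fin d → ℝ) :
    Measurable (rho d r y) := by
  unfold rho
  apply Measurable.div ?_ measurable_const
  apply Finset.measurable_prod
  intro k _
  exact (measurable_psiR r).comp (by fun_prop)

lemma rho_eq_zero {d : ℕ} {r : ℝ} {y x : Fin d → ℝ} {k : Fin d}
    (h : 2 * r < (x k - y k) ^ 2) : rho d r y x = 0 := by
  unfold rho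
  rw [Finset.prod_eq_zero (Finset.mem_univ k), zero_div]
  rw [psiR_eq_zero]
  rw [abs_of_nonneg (by positivity), sq_abs]
  exact h

lemma rho_eq_on_box {d : ℕ} {r : ℝ} {y x : Fin d → ℝ}
    (h : ∀ k, (x k - y k) ^ 2 ≤ r) : rho d r y x = ((mR r) ^ d)⁻¹ := by
  unfold rho
  rw [Finset.prod_eq_one, one_div]
  intro k _
  exact psiR_eq_one (by rw [abs_of_nonneg (by positivity), sq_abs]; exact h k)

lemma integral_muV {d : ℕ} {r : ℝ} (hr : 0 < r) (y : Fin d → ℝ)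
    (g : (Fin d → ℝ) → ℝ) :
    ∫ x, g x ∂(muV d r y) = ∫ x, g x * rho d r y x := by
  have hmeas : Measurable (fun x : Fin d → ℝ => (rho d r y x).toNNReal) :=
    (measurable_rho d r y).real_toNNReal
  have : muV d r y = (volume : Measure (Fin d → ℝ)).withDensity
      (fun x => ((rho d r y x).toNNReal : ℝ≥0∞)) := rfl
  rw [this, integral_withDensity_eq_integral_smul hmeas]
  congr 1
  ext x
  rw [NNReal.smul_def, Real.coe_toNNReal _ (rho_nonneg d r hr y x), smul_eq_mul,
    mul_comm]

/-- Outside a box of radius `b ≥ √(2r)` around `y`, `rho` vanishes. -/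
lemma rho_eq_zero_outside {d : ℕ} {r b : ℝ} (hr : 0 < r)
    (hb : Real.sqrt (2 * r) ≤ b) {y x : Fin d → ℝ}
    (hx : x ∉ Set.pi Set.univ (fun k => Set.Icc (y k - b) (y k + b))) :
    rho d r y x = 0 := by
  simp only [Set.mem_pi, Set.mem_univ, Set.mem_Icc, forall_true_left, not_forall] at hx
  obtain ⟨k, hk⟩ := hx
  have h1 : b < |x k - y k| := by
    rcases abs_cases (x k - y k) with ⟨h, _⟩ | ⟨h, _⟩ <;>
      rw [not_and_or, not_le, not_le] at hk <;> rcases hk with h1 | h1 <;> linarith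
  have h2 : 2 * r < (x k - y k) ^ 2 := by
    have h3 := Real.sq_sqrt (by linarith : (0:ℝ) ≤ 2 * r)
    calc 2 * r = Real.sqrt (2*r) ^ 2 := h3.symm
    _ < |x k - y k| ^ 2 := by nlinarith [Real.sqrt_nonneg (2*r)]
    _ = (x k - y k) ^ 2 := sq_abs _
  exact rho_eq_zero h2

/-- A "hyperplane" `{x | x k = a}` is Lebesgue-null. -/
lemma hyperplane_null {d : ℕ} (k : Fin d) (a : ℝ) :
    volume {x : Fin d → ℝ | x k = a} = 0 := by
  have h1 : {x : Fin d → ℝ | x k = a} =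
      Set.pi Set.univ (Function.update (fun _ : Fin d => (Set.univ : Set ℝ)) k {a}) := by
    ext x
    simp only [Set.mem_setOf_eq, Set.mem_pi, Set.mem_univ, forall_true_left]
    constructor
    · intro h i
      rcases eq_or_ne i k with rfl | hik
      · simp [Function.update_self, h]
      · simp [Function.update_of_ne hik]
    · intro h
      have := h k
      simpa [Function.update_self] using this
  rw [h1, volume_pi_pi]
  apply Finset.prod_eq_zero (Finset.mem_univ k)
  simp [Function.update_self]

/-- Integrability of `g * rho` for continuous `g`. -/
lemma integrable_mul_rho {d : ℕ} {r : ℝ} (hr : 0 < r) (y : Fin d → ℝ)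
    {g : (Fin d → ℝ) → ℝ} (hg : Continuous g) :
    Integrable (fun x => g x * rho d r y x) := by
  set b := Real.sqrt (2 * r) with hb
  set T := Set.pi Set.univ (fun k => Set.Icc (y k - b) (y k + b)) with hT
  have hTc : IsCompact T := isCompact_univ_pi fun k => isCompact_Icc
  obtain ⟨M, hM⟩ := hTc.exists_bound_of_continuousOn hg.continuousOn
  have hM0 : 0 ≤ M := by
    have : y ∈ T := by
      simp only [hT, Set.mem_pi, Set.mem_univ, Set.mem_Icc, forall_true_left]
      intro k
      constructor <;> nlinarith [Real.sqrt_nonneg (2*r)]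
    exact (norm_nonneg _).trans (hM y this)
  apply Integrable.mono' (g := T.indicator (fun _ => M * (Real.exp 1 ^ d / (mR r) ^ d)))
  · exact (IntegrableOn.integrable_indicator
      (integrableOn_const hTc.measure_lt_top.ne) hTc.measurableSet)
  · exact (hg.measurable.mul (measurable_rho d r y)).aestronglyMeasurable
  · refine Filter.Eventually.of_forall fun x => ?_
    by_cases hx : x ∈ T
    · rw [Set.indicator_of_mem hx, Real.norm_eq_abs, abs_mul,
        abs_of_nonneg (rho_nonneg d r hr y x)]
      have := mR_pos hr
      exact mul_le_mul (by simpa [Real.norm_eq_abs] using hM x hx)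
        (rho_le d r hr y x) (rho_nonneg d r hr y x) hM0
    · rw [Set.indicator_of_notMem hx, rho_eq_zero_outside hr le_rfl hx, mul_zero,
        norm_zero]

lemma rho_eq_zero' {d : ℕ} {r : ℝ} (hr : 0 < r) {y x : Fin d → ℝ} {k : Fin d}
    (h : Real.sqrt (2 * r) < |x k - y k|) : rho d r y x = 0 := by
  apply rho_eq_zero (k := k)
  have h3 := Real.sq_sqrt (by linarith : (0:ℝ) ≤ 2 * r)
  calc 2 * r = Real.sqrt (2*r) ^ 2 := h3.symm
  _ < |x k - y k| ^ 2 := by nlinarith [Real.sqrt_nonneg (2*r)]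
  _ = (x k - y k) ^ 2 := sq_abs _

/-- Continuity in the parameter of integrals against the moving density. -/
lemma continuous_integral_mul_rho {d : ℕ} {r : ℝ} (hr : 0 < r)
    {P : Type} [NormedAddCommGroup P] [NormedSpace ℝ P] [ProperSpace P]
    {Y : P → Fin d → ℝ} (hY : Continuous Y)
    {g : P → (Fin d → ℝ) → ℝ}
    (hg : Continuous fun q : P × (Fin d → ℝ) => g q.1 q.2) :
    Continuous fun p => ∫ x, g p x * rho d r (Y p) x := by
  rw [continuous_iff_continuousAt]
  intro p₀
  set y₀ := Y p₀ with hy₀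
  set b : ℝ := Real.sqrt (2 * r) + 1 with hb
  have hb0 : 0 < b := by have := Real.sqrt_nonneg (2*r); linarith
  set T := Set.pi Set.univ (fun k => Set.Icc (y₀ k - b) (y₀ k + b)) with hT
  have hTc : IsCompact T := isCompact_univ_pi fun k => isCompact_Icc
  have hy₀T : y₀ ∈ T := by
    simp only [hT, Set.mem_pi, Set.mem_univ, Set.mem_Icc, forall_true_left]
    intro k; constructor <;> linarith
  set K := Metric.closedBall p₀ 1 with hK
  have hKc : IsCompact K := isCompact_closedBall _ _
  obtain ⟨M, hM⟩ := (hKc.prod hTc).exists_bound_of_continuousOn hg.continuousOn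
  have hM0 : 0 ≤ M :=
    (norm_nonneg _).trans (hM (p₀, y₀) ⟨Metric.mem_closedBall_self one_pos.le, hy₀T⟩)
  have hm := mR_pos hr
  apply continuousAt_of_dominated
    (bound := T.indicator fun _ => M * (Real.exp 1 ^ d / (mR r) ^ d))
  · refine Filter.Eventually.of_forall fun p => ?_
    have hgp : Continuous (g p) := hg.comp (continuous_const.prodMk continuous_id)
    exact (hgp.measurable.mul (measurable_rho d r (Y p))).aestronglyMeasurable
  · have hev1 : ∀ᶠ p in nhds p₀, p ∈ K :=
      Filter.eventually_of_mem (Metric.closedBall_mem_nhds p₀ one_pos) fun p hp => hp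
    have hev2 : ∀ᶠ p in nhds p₀, dist (Y p) y₀ ≤ 1 := by
      refine (hY.tendsto p₀).eventually (p := fun z => dist z y₀ ≤ 1) ?_
      exact Filter.eventually_of_mem (Metric.closedBall_mem_nhds y₀ one_pos)
        fun z hz => Metric.mem_closedBall.1 hz
    filter_upwards [hev1, hev2] with p hp1 hp2
    refine Filter.Eventually.of_forall fun x => ?_
    by_cases hx : x ∈ T
    · rw [Set.indicator_of_mem hx, Real.norm_eq_abs, abs_mul,
        abs_of_nonneg (rho_nonneg d r hr (Y p) x)]
      exact mul_le_mul (by simpa [Real.norm_eq_abs] using hM (p, x) ⟨hp1, hx⟩)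
        (rho_le d r hr (Y p) x) (rho_nonneg d r hr (Y p) x) hM0
    · rw [Set.indicator_of_notMem hx]
      simp only [hT, Set.mem_pi, Set.mem_univ, Set.mem_Icc, forall_true_left,
        not_forall] at hx
      obtain ⟨k, hk⟩ := hx
      have h1 : b < |x k - y₀ k| := by
        rcases abs_cases (x k - y₀ k) with ⟨h, _⟩ | ⟨h, _⟩ <;>
          rw [not_and_or, not_le, not_le] at hk <;> rcases hk with h1 | h1 <;> linarith
      have h2 : |Y p k - y₀ k| ≤ 1 := by
        have := dist_le_pi_dist (Y p) y₀ k
        rw [Real.dist_eq] at this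
        linarith
      have h3 : Real.sqrt (2 * r) < |x k - Y p k| := by
        have := abs_sub_abs_le_abs_sub (x k - y₀ k) (Y p k - y₀ k)
        have h4 : x k - y₀ k - (Y p k - y₀ k) = x k - Y p k := by ring
        rw [h4] at this
        linarith [hb]
      rw [rho_eq_zero' hr h3, mul_zero, norm_zero]
  · exact (IntegrableOn.integrable_indicator
      (integrableOn_const hTc.measure_lt_top.ne) hTc.measurableSet)
  · -- a.e. continuity in the parameter
    set N := ⋃ k : Fin d, ({x : Fin d → ℝ | x k = y₀ k + Real.sqrt r} ∪
      {x | x k = y₀ k - Real.sqrt r} ∪ {x | x k = y₀ k + Real.sqrt (2*r)} ∪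
      {x | x k = y₀ k - Real.sqrt (2*r)}) with hN
    have hN0 : volume N = 0 := by
      refine measure_iUnion_null fun k => ?_
      repeat'
        first
        | exact hyperplane_null k _
        | apply measure_union_null
    filter_upwards [measure_eq_zero_iff_ae_notMem.1 hN0] with x hxN
    apply ContinuousAt.mul
    · exact (hg.comp (continuous_id.prodMk continuous_const)).continuousAt
    · unfold rho
      apply ContinuousAt.div_const
      have key : ∀ k : Fin d, ContinuousAt
          (fun p => psiR r (|x k - Y p k| ^ 2)) p₀ := by
        intro k
        have ht0 : (0:ℝ) ≤ |x k - y₀ k| ^ 2 := by positivity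
        have hne : ∀ s : ℝ, 0 ≤ s → |x k - y₀ k| ^ 2 = s →
            x k = y₀ k + Real.sqrt s ∨ x k = y₀ k - Real.sqrt s := by
          intro s hs hmeq
          have : |x k - y₀ k| = Real.sqrt s := by
            rw [← hmeq, Real.sqrt_sq_eq_abs, abs_abs]
          rcases abs_eq (Real.sqrt_nonneg s) |>.1 this with h | h
          · left; linarith
          · right; linarith
        have h1 : |x k - y₀ k| ^ 2 ≠ r := by
          intro h
          rcases hne r hr.le h with h | h <;>
            exact hxN (by
              simp only [hN, Set.mem_iUnion, Set.mem_union, Set.mem_setOf_eq]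
              exact ⟨k, by tauto⟩)
        have h2 : |x k - y₀ k| ^ 2 ≠ 2 * r := by
          intro h
          rcases hne (2*r) (by linarith) h with h | h <;>
            exact hxN (by
              simp only [hN, Set.mem_iUnion, Set.mem_union, Set.mem_setOf_eq]
              exact ⟨k, by tauto⟩)
        have hcomp : ContinuousAt (fun p => |x k - Y p k| ^ 2) p₀ := by
          apply ContinuousAt.pow
          apply ContinuousAt.abs
          exact (continuousAt_const.sub ((continuous_apply k).comp hY).continuousAt)
        refine ContinuousAt.comp (g := psiR r) ?_ hcomp
        simp only [← hy₀]
        exact psiR_continuousAt hr ht0 h1 h2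
      exact tendsto_finset_prod Finset.univ fun k _ => key k

lemma poly_vanish {dst kst : ℕ} (hd : 0 < dst) (ξ c : Fin (dst * kst) → ℝ)
    (y : Fin dst → ℝ) (δ : ℝ) (hδ : 0 < δ)
    (hz : ∀ x ∈ Set.pi Set.univ (fun k => Metric.ball (y k) δ),
      (∑ l, ξ l * ((x (jfun dst hd l.val)) ^ (kfun dst l.val + 1) - c l)) = 0)
    (l₀ : Fin (dst * kst)) : ξ l₀ = 0 := by
  set j := jfun dst hd l₀.val with hj
  set q : Polynomial ℝ := ∑ l : Fin (dst * kst),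
    if jfun dst hd l.val = j then
      Polynomial.C (ξ l) * Polynomial.X ^ (kfun dst l.val + 1) - Polynomial.C (ξ l * c l)
    else Polynomial.C (ξ l * ((y (jfun dst hd l.val)) ^ (kfun dst l.val + 1) - c l))
    with hq
  have heval : ∀ t ∈ Metric.ball (y j) δ, q.eval t = 0 := by
    intro t ht
    have hx : Function.update y j t ∈ Set.pi Set.univ (fun k => Metric.ball (y k) δ) := by
      rw [Set.mem_univ_pi]
      intro k
      rcases eq_or_ne k j with rfl | hk
      · simpa [Function.update_self] using ht
      · simpa [Function.update_of_ne hk] using Metric.mem_ball_self (x := y k) hδ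
    have h0 := hz _ hx
    rw [hq, Polynomial.eval_finset_sum]
    rw [← h0]
    apply Finset.sum_congr rfl
    intro l _
    rcases eq_or_ne (jfun dst hd l.val) j with hjl | hjl
    · rw [if_pos hjl, hjl, Function.update_self]
      simp only [Polynomial.eval_sub, Polynomial.eval_mul, Polynomial.eval_C,
        Polynomial.eval_pow, Polynomial.eval_X]
      ring
    · rw [if_neg hjl, Function.update_of_ne hjl]
      simp only [Polynomial.eval_C]
  have hq0 : q = 0 := by
    have hsub : Metric.ball (y j) δ ⊆ {x | q.IsRoot x} := fun t ht => heval t ht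
    have hinf : (Metric.ball (y j) δ).Infinite := by
      rw [Real.ball_eq_Ioo]
      exact Set.Ioo_infinite (by linarith)
    exact Polynomial.eq_zero_of_infinite_isRoot q (hinf.mono hsub)
  have hcoeff : q.coeff (kfun dst l₀.val + 1) = ξ l₀ := by
    rw [hq, Polynomial.finset_sum_coeff]
    rw [Finset.sum_eq_single l₀]
    · rw [if_pos rfl]
      simp [Polynomial.coeff_sub, Polynomial.coeff_C_mul, Polynomial.coeff_X_pow,
        Polynomial.coeff_C]
    · intro l _ hl
      rcases eq_or_ne (jfun dst hd l.val) j with hjl | hjl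
      · rw [if_pos hjl]
        have hne : kfun dst l.val + 1 ≠ kfun dst l₀.val + 1 := by
          intro h
          apply hl
          have h1 : l.val % dst = l₀.val % dst := congrArg Fin.val hjl
          have h2 : l.val / dst = l₀.val / dst := by
            simpa [kfun] using Nat.succ_injective h
          apply Fin.ext
          calc l.val = dst * (l.val / dst) + l.val % dst := (Nat.div_add_mod _ _).symm
          _ = dst * (l₀.val / dst) + l₀.val % dst := by rw [h1, h2]
          _ = l₀.val := Nat.div_add_mod _ _
        simp [Polynomial.coeff_sub, Polynomial.coeff_C_mul, Polynomial.coeff_X_pow,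
          Polynomial.coeff_C, Ne.symm hne,
          show kfun dst l₀.val ≠ kfun dst l.val from fun h => hne (by rw [h])]
      · rw [if_neg hjl, Polynomial.coeff_C, if_neg (Nat.succ_ne_zero _)]
    · intro h
      exact absurd (Finset.mem_univ l₀) h
  rw [← hcoeff, hq0, Polynomial.coeff_zero]

lemma Q_pos {dst kst : ℕ} (hd : 0 < dst) {r : ℝ} (hr : 0 < r)
    (y : Fin dst → ℝ) (ξ : Fin (dst * kst) → ℝ) (hξ : ∑ l, ξ l ^ 2 = 1)
    (c : Fin (dst * kst) → ℝ) :
    0 < ∫ x, (∑ l, ξ l * ((x (jfun dst hd l.val)) ^ (kfun dst l.val + 1) - c l)) ^ 2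
        * rho dst r y x := by
  set Pfun : (Fin dst → ℝ) → ℝ :=
    fun x => ∑ l, ξ l * ((x (jfun dst hd l.val)) ^ (kfun dst l.val + 1) - c l) with hP
  have hPcont : Continuous Pfun := by
    apply continuous_finset_sum
    intro l _
    exact continuous_const.mul (((continuous_apply _).pow _).sub continuous_const)
  set h : (Fin dst → ℝ) → ℝ := fun x => (Pfun x) ^ 2 * rho dst r y x with hh
  have hint : Integrable h := integrable_mul_rho hr y (hPcont.pow 2)
  have hnn : ∀ x, 0 ≤ h x := fun x => mul_nonneg (sq_nonneg _) (rho_nonneg dst r hr y x)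
  have hm := mR_pos hr
  -- find a point where Pfun is nonzero
  have hl₀ : ∃ l₀, ξ l₀ ≠ 0 := by
    by_contra hcon
    push_neg at hcon
    rw [Finset.sum_eq_zero (fun l _ => by rw [hcon l]; ring)] at hξ
    exact zero_ne_one hξ
  obtain ⟨l₀, hl₀⟩ := hl₀
  set δ := Real.sqrt r with hδdef
  have hδ : 0 < δ := Real.sqrt_pos.2 hr
  set U := Set.pi Set.univ (fun k => Metric.ball (y k) δ) with hU
  have hUopen : IsOpen U := isOpen_set_pi Set.finite_univ fun k _ => Metric.isOpen_ball
  have hx₀ : ∃ x₀ ∈ U, Pfun x₀ ≠ 0 := by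
    by_contra hcon
    push_neg at hcon
    exact hl₀ (poly_vanish hd ξ c y δ hδ hcon l₀)
  obtain ⟨x₀, hx₀U, hx₀⟩ := hx₀
  have hPx₀ : 0 < (Pfun x₀) ^ 2 := by positivity
  set W := U ∩ {x | (Pfun x₀) ^ 2 / 2 < (Pfun x) ^ 2} with hW
  have hWopen : IsOpen W := hUopen.inter (isOpen_lt continuous_const (hPcont.pow 2))
  have hx₀W : x₀ ∈ W := ⟨hx₀U, by simpa using by linarith⟩
  have hrhoU : ∀ x ∈ U, rho dst r y x = ((mR r) ^ dst)⁻¹ := by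
    intro x hx
    apply rho_eq_on_box
    intro k
    have hk := hx k (Set.mem_univ k)
    rw [Metric.mem_ball, Real.dist_eq] at hk
    nlinarith [Real.sq_sqrt hr.le, abs_nonneg (x k - y k), sq_abs (x k - y k)]
  set c₀ : ℝ := (Pfun x₀) ^ 2 / 2 * ((mR r) ^ dst)⁻¹ with hc₀
  have hc₀pos : 0 < c₀ := by positivity
  have hWbound : ∀ x ∈ W, c₀ ≤ h x := by
    intro x hx
    rw [hh]
    simp only
    rw [hrhoU x hx.1]
    apply mul_le_mul_of_nonneg_right (le_of_lt hx.2) (by positivity)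
  -- measure of W
  have hWpos : 0 < volume W := hWopen.measure_pos volume ⟨x₀, hx₀W⟩
  have hWlt : volume W < ⊤ := by
    have hsub : W ⊆ Set.pi Set.univ (fun k => Set.Icc (y k - δ) (y k + δ)) := by
      intro x hx k _
      have hk := hx.1 k (Set.mem_univ k)
      rw [Metric.mem_ball, Real.dist_eq] at hk
      rcases abs_cases (x k - y k) with ⟨h1, _⟩ | ⟨h1, _⟩ <;>
        exact ⟨by linarith, by linarith⟩
    exact lt_of_le_of_lt (measure_mono hsub)
      (isCompact_univ_pi fun k => isCompact_Icc).measure_lt_top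
  have step1 : c₀ * (volume W).toReal ≤ ∫ x in W, h x :=
    by have := setIntegral_ge_of_const_le hWopen.measurableSet hWlt.ne hWbound hint.integrableOn
       rw [smul_eq_mul, measureReal_def, mul_comm _ c₀] at this; exact this
  have step2 : (∫ x in W, h x) ≤ ∫ x, h x :=
    setIntegral_le_integral hint (Filter.Eventually.of_forall hnn)
  have hvol : 0 < (volume W).toReal := ENNReal.toReal_pos hWpos.ne' hWlt.ne
  calc (0:ℝ) < c₀ * (volume W).toReal := by positivity
  _ ≤ ∫ x, h x := le_trans step1 step2

theorem uniform_nondegeneracy_of_powers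
    (dst kst : ℕ) (hd : 0 < dst) (r R : ℝ) (hr : 0 < r) (hR : 0 < R) :
    ∃ lamR : ℝ, 0 < lamR ∧
      ∀ y : Fin dst → ℝ, Real.sqrt (∑ k, (y k) ^ 2) ≤ R →
        ∀ ξ : Fin (dst * kst) → ℝ,
          lamR * ∑ l, (ξ l) ^ 2 ≤
            ∫ x, (∑ l, ξ l *
                ((x (jfun dst hd l.val)) ^ (kfun dst l.val + 1) -
                  ∫ x', (x' (jfun dst hd l.val)) ^ (kfun dst l.val + 1) ∂(muV dst r y)))
              ^ 2 ∂(muV dst r y) := by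
  rcases Nat.eq_zero_or_pos kst with rfl | hk
  · refine ⟨1, one_pos, fun y hy ξ => ?_⟩
    haveI : IsEmpty (Fin (dst * 0)) := by rw [mul_zero]; infer_instance
    simp only [Finset.univ_eq_empty, Finset.sum_empty, mul_zero]
    have : ((0:ℝ)) ^ 2 = 0 := by ring
    rw [this, integral_zero]
  · -- the moments as functions of y
    set clfun : (Fin dst → ℝ) → Fin (dst * kst) → ℝ := fun y l =>
      ∫ x, (x (jfun dst hd l.val)) ^ (kfun dst l.val + 1) * rho dst r y x with hclfun
    have hclcont : ∀ l, Continuous (fun y => clfun y l) := by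
      intro l
      exact continuous_integral_mul_rho hr continuous_id
        (g := fun _ x => (x (jfun dst hd l.val)) ^ (kfun dst l.val + 1))
        (((continuous_apply _).comp continuous_snd).pow _)
    -- the quadratic form
    set Qfun : (Fin dst → ℝ) × (Fin (dst * kst) → ℝ) → ℝ := fun p =>
      ∫ x, (∑ l, p.2 l * ((x (jfun dst hd l.val)) ^ (kfun dst l.val + 1)
          - clfun p.1 l)) ^ 2 * rho dst r p.1 x with hQfun
    have hQcont : Continuous Qfun := by
      apply continuous_integral_mul_rho hr continuous_fst
      apply Continuous.pow
      apply continuous_finset_sum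
      intro l _
      refine Continuous.mul ?_ (Continuous.sub ?_ ?_)
      · exact (continuous_apply l).comp (continuous_snd.comp continuous_fst)
      · exact ((continuous_apply _).comp continuous_snd).pow _
      · exact (hclcont l).comp (continuous_fst.comp continuous_fst)
    -- the compact set
    set A : Set (Fin dst → ℝ) := {y | Real.sqrt (∑ k, (y k) ^ 2) ≤ R} with hA
    set S : Set (Fin (dst * kst) → ℝ) := {ξ | ∑ l, (ξ l) ^ 2 = 1} with hS
    have hAc : IsCompact A := by
      apply Metric.isCompact_of_isClosed_isBounded
      · exact isClosed_le (Real.continuous_sqrt.comp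
          (continuous_finset_sum _ fun k _ => (continuous_apply k).pow 2)) continuous_const
      · apply Bornology.IsBounded.subset (Metric.isBounded_closedBall (x := 0) (r := R))
        intro y hy
        rw [Metric.mem_closedBall, dist_zero_right]
        apply pi_norm_le_iff_of_nonneg hR.le |>.2
        intro k
        rw [Real.norm_eq_abs, ← Real.sqrt_sq_eq_abs]
        exact le_trans (Real.sqrt_le_sqrt (Finset.single_le_sum
          (fun i _ => sq_nonneg (y i)) (Finset.mem_univ k))) hy
    have hSc : IsCompact S := by
      apply Metric.isCompact_of_isClosed_isBounded
      · exact isClosed_eq (continuous_finset_sum _ fun l _ => (continuous_apply l).pow 2)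
          continuous_const
      · apply Bornology.IsBounded.subset (Metric.isBounded_closedBall (x := 0) (r := 1))
        intro ξ hξ
        rw [Metric.mem_closedBall, dist_zero_right]
        apply pi_norm_le_iff_of_nonneg zero_le_one |>.2
        intro l
        rw [Real.norm_eq_abs]
        calc |ξ l| = Real.sqrt ((ξ l) ^ 2) := (Real.sqrt_sq_eq_abs _).symm
        _ ≤ Real.sqrt 1 := Real.sqrt_le_sqrt (by
              calc (ξ l) ^ 2 ≤ ∑ l', (ξ l') ^ 2 :=
                    Finset.single_le_sum (fun i _ => sq_nonneg (ξ i)) (Finset.mem_univ l)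
              _ = 1 := hξ)
        _ = 1 := Real.sqrt_one
    have hKc : IsCompact (A ×ˢ S) := hAc.prod hSc
    have hm : 0 < dst * kst := Nat.mul_pos hd hk
    have hKne : (A ×ˢ S).Nonempty := by
      refine ⟨((0 : Fin dst → ℝ),
        (fun l => if l = (⟨0, hm⟩ : Fin (dst * kst)) then (1:ℝ) else 0)), ?_, ?_⟩
      · simp only [hA, Set.mem_setOf_eq]
        simpa using hR.le
      · simp only [hS, Set.mem_setOf_eq]
        have h1 : ∀ l : Fin (dst * kst),
            ((if l = (⟨0, hm⟩ : Fin (dst * kst)) then (1:ℝ) else 0)) ^ 2 =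
            if l = ⟨0, hm⟩ then 1 else 0 := by
          intro l
          by_cases h : l = ⟨0, hm⟩ <;> simp [h]
        rw [Finset.sum_congr rfl fun l _ => h1 l, Finset.sum_ite_eq']
        simp
    obtain ⟨pstar, hpstar, hmin⟩ := hKc.exists_isMinOn hKne hQcont.continuousOn
    refine ⟨Qfun pstar, Q_pos hd hr pstar.1 pstar.2 hpstar.2 (clfun pstar.1), ?_⟩
    intro y hy ξ
    -- rewrite the muV-integrals as Lebesgue integrals
    have hc : ∀ l : Fin (dst * kst),
        (∫ x', (x' (jfun dst hd l.val)) ^ (kfun dst l.val + 1) ∂(muV dst r y))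
          = clfun y l := fun l => integral_muV hr y _
    have hrw : (∫ x, (∑ l, ξ l *
          ((x (jfun dst hd l.val)) ^ (kfun dst l.val + 1) -
            ∫ x', (x' (jfun dst hd l.val)) ^ (kfun dst l.val + 1) ∂(muV dst r y)))
          ^ 2 ∂(muV dst r y)) = Qfun (y, ξ) := by
      simp only [hc]
      exact integral_muV hr y _
    rw [hrw]
    by_cases hs0 : ∑ l, (ξ l) ^ 2 = 0
    · rw [hs0, mul_zero, hQfun]
      exact integral_nonneg fun x => mul_nonneg (sq_nonneg _) (rho_nonneg dst r hr y x)
    · have hsum_nonneg : 0 ≤ ∑ l, (ξ l) ^ 2 :=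
        Finset.sum_nonneg fun l _ => sq_nonneg _
      have hsum_pos : 0 < ∑ l, (ξ l) ^ 2 := lt_of_le_of_ne hsum_nonneg (Ne.symm hs0)
      set s : ℝ := Real.sqrt (∑ l, (ξ l) ^ 2) with hsdef
      have hspos : 0 < s := Real.sqrt_pos.2 hsum_pos
      have hs2 : s ^ 2 = ∑ l, (ξ l) ^ 2 := Real.sq_sqrt hsum_nonneg
      set ξ' : Fin (dst * kst) → ℝ := fun l => ξ l / s with hξ'
      have hξ'S : ξ' ∈ S := by
        simp only [hS, Set.mem_setOf_eq, hξ', div_pow, ← Finset.sum_div]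
        rw [hs2]
        exact div_self hs0
      have hmem : (y, ξ') ∈ A ×ˢ S := ⟨hy, hξ'S⟩
      have hle : Qfun pstar ≤ Qfun (y, ξ') := hmin hmem
      have hscale : Qfun (y, ξ) = s ^ 2 * Qfun (y, ξ') := by
        rw [hQfun]
        simp only
        rw [← integral_const_mul]
        congr 1
        funext x
        have hsum : ∑ l, ξ l * ((x (jfun dst hd l.val)) ^ (kfun dst l.val + 1)
            - clfun y l) = s * ∑ l, ξ' l * ((x (jfun dst hd l.val)) ^ (kfun dst l.val + 1)
            - clfun y l) := by
          rw [Finset.mul_sum]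
          apply Finset.sum_congr rfl
          intro l _
          rw [hξ']
          field_simp
        rw [hsum, mul_pow]
        ring
      rw [hscale, ← hs2]
      have := mul_le_mul_of_nonneg_left hle (sq_nonneg s)
      linarith

end
end

section
/- Let N ∈ ℕ, p ∈ (0,1), and let (χ_n)_{n∈ℕ} be independent Bernoulli random variables with P(χ_n = 1) = p. Let c be a finitely supported family of real numbers indexed by the strictly increasing tuples α = (α_1 < ⋯ < α_N) of positive integers, and set Ψ_N(c²) = Σ_{|α|=N} c(α)² χ^α. If 0 < x < (p/2)^N |c|_N², then P( Ψ_N(c²) ≤ x ) ≤ (2e³/9) · N · exp( − x² / (δ_N(c)² |c|_N²) ). -/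
set_option linter.unusedSectionVars false
set_option linter.unnecessarySeqFocus false
set_option linter.unnecessarySimpa false
set_option linter.unusedVariables false
set_option maxHeartbeats 1000000
open MeasureTheory ProbabilityTheory Real
noncomputable section






/-- Key logarithmic inequality: for `0 < t ≤ 1`, `2(1-t) ≤ (-log t)(1+t)`. -/
lemma IH_key_log (t : ℝ) (ht0 : 0 < t) (ht1 : t ≤ 1) :
    2 * (1 - t) ≤ (-Real.log t) * (1 + t) := by
  set g : ℝ → ℝ := fun s => Real.log s + 4 / (1 + s) with hg
  have hderiv : ∀ s ∈ Set.Ioi (0:ℝ), HasDerivAt g (1/s - 4/(1+s)^2) s := by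
    intro s hs
    have hs0 : (0:ℝ) < s := hs
    have hs1 : (0:ℝ) < 1 + s := by linarith
    have h1 : HasDerivAt Real.log (1/s) s := by
      simpa [one_div] using Real.hasDerivAt_log (ne_of_gt hs0)
    have h2 : HasDerivAt (fun u : ℝ => 1 + u) 1 s := by
      simpa using (hasDerivAt_id s).const_add 1
    have h3 : HasDerivAt (fun u : ℝ => (1 + u)⁻¹) (-1/(1+s)^2) s :=
      h2.inv (ne_of_gt hs1)
    have h4 : HasDerivAt (fun u : ℝ => 4 / (1 + u)) (4 * (-1/(1+s)^2)) s := by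
      simpa [div_eq_mul_inv] using h3.const_mul 4
    have := h1.add h4
    exact this.congr_deriv (by ring)
  have hmono : MonotoneOn g (Set.Ioi (0:ℝ)) := by
    apply monotoneOn_of_deriv_nonneg (convex_Ioi 0)
    · intro s hs
      exact ((hderiv s hs).continuousAt).continuousWithinAt
    · intro s hs
      rw [interior_Ioi] at hs
      exact ((hderiv s hs).differentiableAt).differentiableWithinAt
    · intro s hs
      rw [interior_Ioi] at hs
      have hs0 : (0:ℝ) < s := hs
      have hs1 : (0:ℝ) < 1 + s := by linarith
      rw [(hderiv s hs).deriv]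
      rw [sub_nonneg, div_le_div_iff₀ (by positivity) hs0]
      nlinarith [sq_nonneg (1 - s)]
  have h01 : g t ≤ g 1 := hmono (Set.mem_Ioi.2 ht0) (Set.mem_Ioi.2 one_pos) ht1
  have hg1 : g 1 = 2 := by simp [hg]; norm_num
  have hgt : Real.log t + 4 / (1 + t) ≤ 2 := by rw [hg1] at h01; exact h01
  have ht1' : (0:ℝ) < 1 + t := by linarith
  have h5 : 4 / (1 + t) ≤ 2 - Real.log t := by linarith
  rw [div_le_iff₀ ht1'] at h5
  nlinarith [h5]







/-- `4p(1-p)(1-e^{-u}) ≤ u(1-p+pe^{-u})` for `u ≥ 0`, `0 ≤ p ≤ 1`. -/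
lemma IH_key_H (p u : ℝ) (hp0 : 0 ≤ p) (hp1 : p ≤ 1) (hu : 0 ≤ u) :
    4 * p * (1 - p) * (1 - Real.exp (-u)) ≤ u * (1 - p + p * Real.exp (-u)) := by
  set t : ℝ := Real.exp (-(u/2)) with htdef
  have ht0 : 0 < t := Real.exp_pos _
  have ht1 : t ≤ 1 := Real.exp_le_one_iff.2 (by linarith)
  have ht2 : t ^ 2 = Real.exp (-u) := by
    rw [htdef, ← Real.exp_nat_mul]
    norm_num
    ring
  have hlog : Real.log t = -(u/2) := Real.log_exp _
  have hA : 4 * (1 - t) ≤ u * (1 + t) := by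
    have := IH_key_log t ht0 ht1
    rw [hlog] at this
    nlinarith [this]
  have k1 : (0:ℝ) ≤ 1 - p + p * t^2 := by nlinarith [sq_nonneg t]
  have k2 : p * (1 - p) * (1 + t)^2 ≤ 1 - p + p * t^2 := by
    nlinarith [sq_nonneg (1 - p - p * t)]
  rw [← ht2]
  have h3 : 4 * (1 - t) * (1 - p + p * t^2) ≤ u * (1 + t) * (1 - p + p * t^2) :=
    mul_le_mul_of_nonneg_right hA k1
  have h4 : 4 * p * (1 - p) * (1 - t^2) * (1 + t) ≤ u * (1 - p + p * t^2) * (1 + t) := by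
    nlinarith [h3, k2, mul_nonneg (by linarith : (0:ℝ) ≤ 4 * (1 - t)) k1]
  have ht1' : (0:ℝ) < 1 + t := by linarith
  exact le_of_mul_le_mul_right h4 ht1'

/-- Pointwise Hoeffding-lemma bound. -/
lemma IH_key_pt (p u : ℝ) (hp0 : 0 ≤ p) (hp1 : p < 1) (hu : 0 ≤ u) :
    1 - p + p * Real.exp (-u) ≤ Real.exp (-(p*u) + u^2/8) := by
  set φ : ℝ → ℝ := fun v => 1 - p + p * Real.exp (-v) with hφdef
  have hφpos : ∀ v, 0 < φ v := by
    intro v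
    have := Real.exp_pos (-v)
    simp only [hφdef]
    nlinarith
  set h : ℝ → ℝ := fun v => -(p*v) + v^2/8 - Real.log (φ v) with hhdef
  have hderiv : ∀ v : ℝ, HasDerivAt h (-p + v/4 - (p * (Real.exp (-v) * (-1))) / φ v) v := by
    intro v
    have h1 : HasDerivAt (fun w : ℝ => -(p*w)) (-p) v := by
      exact ((hasDerivAt_id v).const_mul p).neg.congr_deriv (by ring)
    have h2 : HasDerivAt (fun w : ℝ => w^2/8) (v/4) v := by
      have := (hasDerivAt_pow 2 v).div_const 8
      exact this.congr_deriv (by rw [show (2:ℕ)-1 = 1 from rfl]; push_cast; ring)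
    have h3 : HasDerivAt (fun w : ℝ => Real.exp (-w)) (Real.exp (-v) * (-1)) v := by
      have : HasDerivAt (fun w : ℝ => -w) (-1) v := (hasDerivAt_id v).neg
      exact this.exp
    have h4 : HasDerivAt φ (p * (Real.exp (-v) * (-1))) v := by
      simpa [hφdef] using ((h3.const_mul p).const_add (1 - p))
    have h5 : HasDerivAt (fun w => Real.log (φ w)) ((p * (Real.exp (-v) * (-1))) / φ v) v :=
      h4.log (ne_of_gt (hφpos v))
    exact (h1.add h2).sub h5
  have hmono : MonotoneOn h (Set.Ici (0:ℝ)) := by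
    apply monotoneOn_of_deriv_nonneg (convex_Ici 0)
    · intro v _
      exact ((hderiv v).continuousAt).continuousWithinAt
    · intro v _
      exact ((hderiv v).differentiableAt).differentiableWithinAt
    · intro v hv
      rw [interior_Ici] at hv
      have hv0 : (0:ℝ) < v := hv
      rw [(hderiv v).deriv]
      have hφv : 0 < φ v := hφpos v
      have hnum : 0 ≤ (v/4) * φ v + p * Real.exp (-v) - p * φ v := by
        have := IH_key_H p v hp0 hp1.le hv0.le
        simp only [hφdef]
        nlinarith [this]
      have heq : -p + v/4 - (p * (Real.exp (-v) * (-1))) / φ v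
          = ((v/4) * φ v + p * Real.exp (-v) - p * φ v) / φ v := by
        field_simp
        ring
      rw [heq]
      exact div_nonneg hnum hφv.le
  have h0 : h 0 = 0 := by
    simp [hhdef, hφdef]
  have hh : 0 ≤ h u := by
    have := hmono (Set.mem_Ici.2 le_rfl) (Set.mem_Ici.2 hu) hu
    rw [h0] at this
    exact this
  have hlog : Real.log (φ u) ≤ -(p*u) + u^2/8 := by
    simp only [hhdef] at hh
    linarith
  calc 1 - p + p * Real.exp (-u) = φ u := rfl
    _ = Real.exp (Real.log (φ u)) := (Real.exp_log (hφpos u)).symm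
    _ ≤ Real.exp (-(p*u) + u^2/8) := Real.exp_le_exp.2 hlog

/-- The factor inequality used in the supermartingale argument. -/
lemma IH_key_factor (p lam a d2 Y : ℝ) (hp0 : 0 ≤ p) (hp1 : p < 1)
    (hlam : 0 ≤ lam) (ha : a = lam * p - lam^2 * d2 / 8)
    (hY0 : 0 ≤ Y) (hYd : Y ≤ d2) :
    (1 - p) * Real.exp (a * Y) + p * Real.exp ((a - lam) * Y) ≤ 1 := by
  have hu : 0 ≤ lam * Y := mul_nonneg hlam hY0
  have h1 := IH_key_pt p (lam * Y) hp0 hp1 hu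
  have h2 : (1 - p) * Real.exp (a * Y) + p * Real.exp ((a - lam) * Y)
      = Real.exp (a * Y) * (1 - p + p * Real.exp (-(lam * Y))) := by
    rw [mul_add, ← mul_assoc, mul_comm (Real.exp (a*Y)) p, mul_assoc, ← Real.exp_add]
    have : a * Y + -(lam * Y) = (a - lam) * Y := by ring
    rw [this]
    ring
  rw [h2]
  have h3 : Real.exp (a*Y) * (1 - p + p * Real.exp (-(lam*Y)))
      ≤ Real.exp (a*Y) * Real.exp (-(p*(lam*Y)) + (lam*Y)^2/8) :=
    mul_le_mul_of_nonneg_left h1 (Real.exp_pos _).le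
  refine h3.trans ?_
  rw [← Real.exp_add]
  have hexp : a * Y + (-(p * (lam * Y)) + (lam * Y)^2/8) = lam^2 * Y * (Y - d2) / 8 := by
    rw [ha]; ring
  rw [hexp]
  have : lam^2 * Y * (Y - d2) / 8 ≤ 0 := by
    have : Y - d2 ≤ 0 := by linarith
    have h4 : 0 ≤ lam^2 * Y := mul_nonneg (sq_nonneg _) hY0
    nlinarith
  calc Real.exp _ ≤ Real.exp 0 := Real.exp_le_exp.2 this
    _ = 1 := Real.exp_zero





lemma IH_summable {ι : Type*} {f : ι → ℝ} (h : (Function.support f).Finite) : Summable f :=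
  summable_of_finite_support h

lemma IH_sum_le_tsum_subtype {ι : Type*} (f : ι → ℝ) (hf : ∀ i, 0 ≤ f i)
    (hsupp : (Function.support f).Finite) (Q : ι → Prop) (F : Finset ι)
    (hFQ : ∀ i ∈ F, Q i) :
    ∑ i ∈ F, f i ≤ ∑' (i : {i // Q i}), f i := by
  classical
  have h1 : ∑' (i : {i // Q i}), f i = ∑' i, Set.indicator {i | Q i} f i :=
    tsum_subtype {i | Q i} f
  rw [h1]
  have hsum : Summable ({i | Q i}.indicator f) := by
    apply IH_summable
    refine hsupp.subset fun i hi => ?_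
    by_cases hQ : i ∈ {i | Q i}
    · rwa [Function.mem_support, Set.indicator_of_mem hQ] at hi
    · rw [Function.mem_support, Set.indicator_of_notMem hQ] at hi
      exact absurd rfl hi
  have h2 : ∑ i ∈ F, f i = ∑ i ∈ F, Set.indicator {i | Q i} f i := by
    refine Finset.sum_congr rfl fun i hi => ?_
    rw [Set.indicator_of_mem (show i ∈ {i | Q i} from hFQ i hi)]
  rw [h2]
  exact Summable.sum_le_tsum F (fun i _ => Set.indicator_nonneg (fun j _ => hf j) i) hsum

lemma IH_tsum_subtype_eq {ι : Type*} [DecidableEq ι] (f : ι → ℝ) (Q : ι → Prop)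
    [DecidablePred Q] (F : Finset ι) (hF : ∀ i, f i ≠ 0 → i ∈ F) :
    ∑' (i : {i // Q i}), f i = ∑ i ∈ F.filter Q, f i := by
  classical
  have h1 : ∑' (i : {i // Q i}), f i = ∑' i, Set.indicator {i | Q i} f i :=
    tsum_subtype {i | Q i} f
  rw [h1]
  rw [tsum_eq_sum (s := F.filter Q) ?_]
  · refine Finset.sum_congr rfl fun i hi => ?_
    rw [Set.indicator_of_mem (show i ∈ {i | Q i} from (Finset.mem_filter.1 hi).2)]
  · intro i hi
    by_cases hQ : Q i
    · rw [Set.indicator_of_mem (show i ∈ {i | Q i} from hQ)]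
      by_contra hne
      exact hi (Finset.mem_filter.2 ⟨hF i hne, hQ⟩)
    · exact Set.indicator_of_notMem (show i ∉ {i | Q i} from hQ) f








/-- The fiber function `Y_n` read off from a value tuple `v`. -/
def IH_Y (M : ℕ) (c : (Fin (M+1) → ℕ) → ℝ) (A : Finset (Fin (M+1) → ℕ)) (n : ℕ)
    (v : ℕ → ℝ) : ℝ :=
  ∑ α ∈ A.filter (fun α => α 0 = n), c α ^ 2 * ∏ i : Fin M, v (α i.succ)

/-- The exponential product process. -/
def IH_G (M : ℕ) (c : (Fin (M+1) → ℕ) → ℝ) (A : Finset (Fin (M+1) → ℕ))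
    (lam a : ℝ) (T : Finset ℕ) (v : ℕ → ℝ) : ℝ :=
  ∏ n ∈ T, Real.exp ((a - lam * v n) * IH_Y M c A n v)

variable {M : ℕ} {c : (Fin (M+1) → ℕ) → ℝ} {A : Finset (Fin (M+1) → ℕ)}
  {lam a : ℝ} {T : Finset ℕ}

lemma IH_Y_measurable (n : ℕ) : Measurable (IH_Y M c A n) := by
  apply Finset.measurable_sum
  intro α _
  exact measurable_const.mul (Finset.measurable_prod _ (fun i _ => measurable_pi_apply _))

lemma IH_G_measurable : Measurable (IH_G M c A lam a T) := by
  unfold IH_G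
  apply Finset.measurable_prod
  intro n _
  apply Measurable.exp
  apply Measurable.mul
  · exact measurable_const.sub (measurable_const.mul (measurable_pi_apply n))
  · exact IH_Y_measurable n

lemma IH_Y_congr {n : ℕ} {v w : ℕ → ℝ}
    (h : ∀ α ∈ A, α 0 = n → ∀ i : Fin M, v (α i.succ) = w (α i.succ)) :
    IH_Y M c A n v = IH_Y M c A n w := by
  unfold IH_Y
  refine Finset.sum_congr rfl fun α hα => ?_
  obtain ⟨hαA, hα0⟩ := Finset.mem_filter.1 hα
  congr 1
  exact Finset.prod_congr rfl fun i _ => h α hαA hα0 i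

lemma IH_G_congr {v w : ℕ → ℝ}
    (hY : ∀ n ∈ T, IH_Y M c A n v = IH_Y M c A n w)
    (hv : ∀ n ∈ T, v n = w n) :
    IH_G M c A lam a T v = IH_G M c A lam a T w := by
  unfold IH_G
  refine Finset.prod_congr rfl fun n hn => ?_
  rw [hY n hn, hv n hn]

section withChi

variable {Ω : Type} [MeasurableSpace Ω] {P : Measure Ω} [IsProbabilityMeasure P]
  {p : ℝ} {χ : ℕ → Ω → ℝ}

lemma IH_chi_nonneg (hvals : ∀ n ω, χ n ω = 0 ∨ χ n ω = 1) (n : ℕ) (ω : Ω) :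
    0 ≤ χ n ω := by rcases hvals n ω with h | h <;> rw [h] <;> norm_num

lemma IH_chi_le_one (hvals : ∀ n ω, χ n ω = 0 ∨ χ n ω = 1) (n : ℕ) (ω : Ω) :
    χ n ω ≤ 1 := by rcases hvals n ω with h | h <;> rw [h] <;> norm_num

lemma IH_tuple_measurable (hmeas : ∀ n, Measurable (χ n)) :
    Measurable (fun ω => (fun j => χ j ω)) :=
  measurable_pi_lambda _ (fun j => hmeas j)

lemma IH_Y_nonneg (hvals : ∀ n ω, χ n ω = 0 ∨ χ n ω = 1) (n : ℕ) (ω : Ω) :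
    0 ≤ IH_Y M c A n (fun j => χ j ω) := by
  apply Finset.sum_nonneg
  intro α _
  exact mul_nonneg (sq_nonneg _)
    (Finset.prod_nonneg fun i _ => IH_chi_nonneg hvals _ ω)

lemma IH_Y_le (hvals : ∀ n ω, χ n ω = 0 ∨ χ n ω = 1) (n : ℕ) (ω : Ω) :
    IH_Y M c A n (fun j => χ j ω) ≤ ∑ α ∈ A.filter (fun α => α 0 = n), c α ^ 2 := by
  apply Finset.sum_le_sum
  intro α _
  calc c α ^ 2 * ∏ i : Fin M, χ (α i.succ) ω ≤ c α ^ 2 * 1 := by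
        apply mul_le_mul_of_nonneg_left _ (sq_nonneg _)
        exact Finset.prod_le_one (fun i _ => IH_chi_nonneg hvals _ ω)
          (fun i _ => IH_chi_le_one hvals _ ω)
    _ = c α ^ 2 := mul_one _

lemma IH_G_pos (v : ℕ → ℝ) : 0 < IH_G M c A lam a T v :=
  Finset.prod_pos fun n _ => Real.exp_pos _

lemma IH_G_le {d2 : ℝ} (hvals : ∀ n ω, χ n ω = 0 ∨ χ n ω = 1)
    (hlam : 0 ≤ lam) (ha : 0 ≤ a)
    (hYd : ∀ n ω, IH_Y M c A n (fun j => χ j ω) ≤ d2) (ω : Ω) :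
    IH_G M c A lam a T (fun j => χ j ω) ≤ Real.exp (a * d2) ^ T.card := by
  rw [← Finset.prod_const]
  apply Finset.prod_le_prod (fun n _ => (Real.exp_pos _).le)
  intro n _
  apply Real.exp_le_exp.2
  have h1 : a - lam * χ n ω ≤ a := by
    have := mul_nonneg hlam (IH_chi_nonneg hvals n ω)
    linarith
  calc (a - lam * χ n ω) * IH_Y M c A n (fun j => χ j ω)
      ≤ a * IH_Y M c A n (fun j => χ j ω) :=
        mul_le_mul_of_nonneg_right h1 (IH_Y_nonneg hvals n ω)
    _ ≤ a * d2 := mul_le_mul_of_nonneg_left (hYd n ω) ha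

/-- Independence of a `J`-determined function from `χ n`, `n ∉ J`. -/
lemma IH_indep (hmeas : ∀ n, Measurable (χ n))
    (hindep : iIndepFun χ P)
    (J : Finset ℕ) (n : ℕ) (hn : n ∉ J) (F : (ℕ → ℝ) → ℝ) (hF : Measurable F)
    (hdep : ∀ v w : ℕ → ℝ, (∀ j ∈ J, v j = w j) → F v = F w) :
    IndepFun (fun ω => F (fun j => χ j ω)) (χ n) P := by
  classical
  have hd : Disjoint J ({n} : Finset ℕ) := by
    simp [Finset.disjoint_singleton_right, hn]
  have h1 := hindep.indepFun_finset J {n} hd hmeas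
  set ext : (J → ℝ) → (ℕ → ℝ) := fun v j => if h : j ∈ J then v ⟨j, h⟩ else 0 with hext_def
  have hext : Measurable ext := by
    apply measurable_pi_lambda
    intro j
    by_cases h : j ∈ J
    · simpa [hext_def, h] using measurable_pi_apply (⟨j, h⟩ : J)
    · simpa [hext_def, h] using (measurable_const : Measurable (fun _ : J → ℝ => (0:ℝ)))
  have hG : Measurable (fun v : J → ℝ => F (ext v)) := hF.comp hext
  have hH : Measurable (fun v : ({n} : Finset ℕ) → ℝ => v ⟨n, Finset.mem_singleton_self n⟩) :=
    measurable_pi_apply _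
  have h2 := h1.comp hG hH
  have e1 : (fun v : J → ℝ => F (ext v)) ∘ (fun ω (i : J) => χ i ω)
      = fun ω => F (fun j => χ j ω) := by
    funext ω
    exact hdep _ _ (fun j hj => by simp [hext_def, hj])
  have e2 : (fun v : ({n} : Finset ℕ) → ℝ => v ⟨n, Finset.mem_singleton_self n⟩)
      ∘ (fun ω (i : ({n} : Finset ℕ)) => χ i ω) = χ n := rfl
  rwa [e1, e2] at h2

lemma IH_bounded_integrable {f : Ω → ℝ} (hf : Measurable f) (C : ℝ)
    (hC : ∀ ω, |f ω| ≤ C) : Integrable f P := by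
  refine ⟨hf.aestronglyMeasurable, ?_⟩
  apply MeasureTheory.HasFiniteIntegral.of_bounded (C := C)
  exact ae_of_all _ (fun ω => by simpa using hC ω)

lemma IH_integral_chi (hmeas : ∀ n, Measurable (χ n))
    (hvals : ∀ n ω, χ n ω = 0 ∨ χ n ω = 1)
    (hbern : ∀ n, P {ω | χ n ω = 1} = ENNReal.ofReal p) (hp0 : 0 ≤ p) (n : ℕ) :
    ∫ ω, χ n ω ∂P = p := by
  have hset : MeasurableSet {ω | χ n ω = 1} := (hmeas n) (measurableSet_singleton 1)
  have hrw : χ n = Set.indicator {ω | χ n ω = 1} (fun _ => (1:ℝ)) := by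
    funext ω
    rcases hvals n ω with h | h
    · rw [Set.indicator_of_notMem, h]
      simp only [Set.mem_setOf_eq, h]
      norm_num
    · rw [Set.indicator_of_mem, h]
      exact h
  rw [hrw, MeasureTheory.integral_indicator_const _ hset, measureReal_def, hbern n]
  simp [ENNReal.toReal_ofReal hp0]

lemma IH_integral_chi_mul (hmeas : ∀ n, Measurable (χ n))
    (hindep : iIndepFun χ P)
    (hvals : ∀ n ω, χ n ω = 0 ∨ χ n ω = 1)
    (hbern : ∀ n, P {ω | χ n ω = 1} = ENNReal.ofReal p) (hp0 : 0 ≤ p)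
    (J : Finset ℕ) (n : ℕ) (hn : n ∉ J) (F : (ℕ → ℝ) → ℝ) (hF : Measurable F)
    (hdep : ∀ v w : ℕ → ℝ, (∀ j ∈ J, v j = w j) → F v = F w)
    (C : ℝ) (hC : ∀ ω, |F (fun j => χ j ω)| ≤ C) :
    ∫ ω, χ n ω * F (fun j => χ j ω) ∂P = p * ∫ ω, F (fun j => χ j ω) ∂P := by
  have hind := (IH_indep hmeas hindep J n hn F hF hdep).symm
  have hFm : Measurable (fun ω => F (fun j => χ j ω)) :=
    hF.comp (IH_tuple_measurable hmeas)
  have hint1 : Integrable (χ n) P :=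
    IH_bounded_integrable (hmeas n) 1 (fun ω => by
      rcases hvals n ω with h | h <;> rw [h] <;> norm_num)
  have hint2 : Integrable (fun ω => F (fun j => χ j ω)) P :=
    IH_bounded_integrable hFm C hC
  have := hind.integral_mul_eq_mul_integral hint1.aestronglyMeasurable hint2.aestronglyMeasurable
  calc ∫ ω, χ n ω * F (fun j => χ j ω) ∂P
      = ∫ ω, (χ n * (fun ω => F (fun j => χ j ω))) ω ∂P := rfl
    _ = (∫ ω, χ n ω ∂P) * ∫ ω, F (fun j => χ j ω) ∂P := this
    _ = p * ∫ ω, F (fun j => χ j ω) ∂P := by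
        rw [IH_integral_chi hmeas hvals hbern hp0 n]

end withChi

section Core

variable {Ω : Type} [MeasurableSpace Ω] {P : Measure Ω} [IsProbabilityMeasure P]
  {p : ℝ} {χ : ℕ → Ω → ℝ}
  {M : ℕ} {c : (Fin (M+1) → ℕ) → ℝ} {A : Finset (Fin (M+1) → ℕ)}
  {lam a : ℝ}

lemma IH_core (hp0 : 0 ≤ p) (hmeas : ∀ n, Measurable (χ n))
    (hindep : iIndepFun χ P)
    (hvals : ∀ n ω, χ n ω = 0 ∨ χ n ω = 1)
    (hbern : ∀ n, P {ω | χ n ω = 1} = ENNReal.ofReal p)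
    (hA : ∀ α ∈ A, StrictMono α)
    (hlam : 0 ≤ lam) (ha : 0 ≤ a) {d2 : ℝ}
    (hYd : ∀ n ω, IH_Y M c A n (fun j => χ j ω) ≤ d2)
    (hfac : ∀ Yv : ℝ, 0 ≤ Yv → Yv ≤ d2 →
      (1 - p) * Real.exp (a * Yv) + p * Real.exp ((a - lam) * Yv) ≤ 1)
    (T : Finset ℕ) :
    ∫ ω, IH_G M c A lam a T (fun j => χ j ω) ∂P ≤ 1 := by
  classical
  induction T using Finset.induction_on_min with
  | empty => simp [IH_G]
  | insert n T' hlt IH =>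
    have hnT : n ∉ T' := fun h => lt_irrefl n (hlt n h)
    set FA : (ℕ → ℝ) → ℝ :=
      fun v => Real.exp (a * IH_Y M c A n v) * IH_G M c A lam a T' v with hFA
    set FB : (ℕ → ℝ) → ℝ :=
      fun v => Real.exp ((a - lam) * IH_Y M c A n v) * IH_G M c A lam a T' v with hFB
    set J : Finset ℕ := T' ∪ (A.filter (fun α => n ≤ α 0)).biUnion
        (fun α => Finset.image (fun i : Fin M => α i.succ) Finset.univ) with hJ
    have hJgt : ∀ j ∈ J, n < j := by
      intro j hj
      rcases Finset.mem_union.1 hj with h | h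
      · exact hlt j h
      · obtain ⟨α, hα, hj2⟩ := Finset.mem_biUnion.1 h
        obtain ⟨hαA, hα0⟩ := Finset.mem_filter.1 hα
        obtain ⟨i, _, rfl⟩ := Finset.mem_image.1 hj2
        calc n ≤ α 0 := hα0
          _ < α i.succ := hA α hαA (Fin.succ_pos i)
    have hnJ : n ∉ J := fun h => lt_irrefl n (hJgt n h)
    have hYeq : ∀ (v w : ℕ → ℝ), (∀ j ∈ J, v j = w j) → ∀ k, n ≤ k →
        IH_Y M c A k v = IH_Y M c A k w := by
      intro v w hvw k hk
      apply IH_Y_congr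
      intro α hαA hα0 i
      apply hvw
      apply Finset.mem_union_right
      exact Finset.mem_biUnion.2 ⟨α, Finset.mem_filter.2 ⟨hαA, hα0 ▸ hk⟩,
        Finset.mem_image.2 ⟨i, Finset.mem_univ i, rfl⟩⟩
    have hGeq : ∀ (v w : ℕ → ℝ), (∀ j ∈ J, v j = w j) →
        IH_G M c A lam a T' v = IH_G M c A lam a T' w := by
      intro v w hvw
      apply IH_G_congr
      · intro k hk; exact hYeq v w hvw k (le_of_lt (hlt k hk))
      · intro k hk; exact hvw k (Finset.mem_union_left _ hk)
    have hdepA : ∀ v w : ℕ → ℝ, (∀ j ∈ J, v j = w j) → FA v = FA w := by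
      intro v w hvw
      simp only [hFA]
      rw [hYeq v w hvw n le_rfl, hGeq v w hvw]
    have hdepB : ∀ v w : ℕ → ℝ, (∀ j ∈ J, v j = w j) → FB v = FB w := by
      intro v w hvw
      simp only [hFB]
      rw [hYeq v w hvw n le_rfl, hGeq v w hvw]
    have hFAm : Measurable FA := (((IH_Y_measurable n).const_mul a).exp).mul IH_G_measurable
    have hFBm : Measurable FB :=
      (((IH_Y_measurable n).const_mul (a - lam)).exp).mul IH_G_measurable
    set CA : ℝ := Real.exp (a * d2) * Real.exp (a * d2) ^ T'.card with hCA
    have hGle : ∀ ω, IH_G M c A lam a T' (fun j => χ j ω) ≤ Real.exp (a * d2) ^ T'.card :=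
      fun ω => IH_G_le hvals hlam ha hYd ω
    have hexpleA : ∀ ω, Real.exp (a * IH_Y M c A n (fun j => χ j ω)) ≤ Real.exp (a * d2) :=
      fun ω => Real.exp_le_exp.2 (mul_le_mul_of_nonneg_left (hYd n ω) ha)
    have hexpleB : ∀ ω, Real.exp ((a - lam) * IH_Y M c A n (fun j => χ j ω))
        ≤ Real.exp (a * d2) := by
      intro ω
      apply Real.exp_le_exp.2
      have h1 : (a - lam) * IH_Y M c A n (fun j => χ j ω)
          ≤ a * IH_Y M c A n (fun j => χ j ω) :=
        mul_le_mul_of_nonneg_right (by linarith) (IH_Y_nonneg hvals n ω)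
      exact h1.trans (mul_le_mul_of_nonneg_left (hYd n ω) ha)
    have hFAbd : ∀ ω, |FA (fun j => χ j ω)| ≤ CA := by
      intro ω
      rw [abs_of_nonneg (mul_nonneg (Real.exp_pos _).le (IH_G_pos _).le)]
      exact mul_le_mul (hexpleA ω) (hGle ω) (IH_G_pos _).le (Real.exp_pos _).le
    have hFBbd : ∀ ω, |FB (fun j => χ j ω)| ≤ CA := by
      intro ω
      rw [abs_of_nonneg (mul_nonneg (Real.exp_pos _).le (IH_G_pos _).le)]
      exact mul_le_mul (hexpleB ω) (hGle ω) (IH_G_pos _).le (Real.exp_pos _).le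
    have htupm := IH_tuple_measurable hmeas
    have hintA : Integrable (fun ω => FA (fun j => χ j ω)) P :=
      IH_bounded_integrable (hFAm.comp htupm) CA hFAbd
    have hintB : Integrable (fun ω => FB (fun j => χ j ω)) P :=
      IH_bounded_integrable (hFBm.comp htupm) CA hFBbd
    have hchibd : ∀ (f : Ω → ℝ) (hf : ∀ ω, |f ω| ≤ CA) (ω : Ω), |χ n ω * f ω| ≤ CA := by
      intro f hf ω
      rw [abs_mul]
      calc |χ n ω| * |f ω| ≤ 1 * CA := by
            apply mul_le_mul _ (hf ω) (abs_nonneg _) zero_le_one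
            rw [abs_of_nonneg (IH_chi_nonneg hvals n ω)]
            exact IH_chi_le_one hvals n ω
        _ = CA := one_mul _
    have hintχA : Integrable (fun ω => χ n ω * FA (fun j => χ j ω)) P :=
      IH_bounded_integrable ((hmeas n).mul (hFAm.comp htupm)) CA
        (hchibd _ hFAbd)
    have hintχB : Integrable (fun ω => χ n ω * FB (fun j => χ j ω)) P :=
      IH_bounded_integrable ((hmeas n).mul (hFBm.comp htupm)) CA
        (hchibd _ hFBbd)
    have hintG' : Integrable (fun ω => IH_G M c A lam a T' (fun j => χ j ω)) P :=
      IH_bounded_integrable (IH_G_measurable.comp htupm) (Real.exp (a*d2) ^ T'.card)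
        (fun ω => by rw [abs_of_nonneg (IH_G_pos _).le]; exact hGle ω)
    have hsplit : ∀ ω : Ω, IH_G M c A lam a (insert n T') (fun j => χ j ω)
        = (1 - χ n ω) * FA (fun j => χ j ω) + χ n ω * FB (fun j => χ j ω) := by
      intro ω
      have h1 : IH_G M c A lam a (insert n T') (fun j => χ j ω)
          = Real.exp ((a - lam * χ n ω) * IH_Y M c A n (fun j => χ j ω))
            * IH_G M c A lam a T' (fun j => χ j ω) := by
        simp only [IH_G, Finset.prod_insert hnT]
      rw [h1]
      rcases hvals n ω with h | h <;> rw [h] <;> simp [hFA, hFB]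
    calc ∫ ω, IH_G M c A lam a (insert n T') (fun j => χ j ω) ∂P
        = ∫ ω, (FA (fun j => χ j ω) - χ n ω * FA (fun j => χ j ω)
            + χ n ω * FB (fun j => χ j ω)) ∂P := by
          apply integral_congr_ae (ae_of_all _ (fun ω => ?_))
          rw [hsplit ω]; ring
      _ = ((∫ ω, FA (fun j => χ j ω) ∂P) - ∫ ω, χ n ω * FA (fun j => χ j ω) ∂P)
            + ∫ ω, χ n ω * FB (fun j => χ j ω) ∂P := by
          have h1 : Integrable (fun ω => FA (fun j => χ j ω)
              - χ n ω * FA (fun j => χ j ω)) P := hintA.sub hintχA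
          rw [integral_add h1 hintχB, integral_sub hintA hintχA]
      _ = ((∫ ω, FA (fun j => χ j ω) ∂P) - p * ∫ ω, FA (fun j => χ j ω) ∂P)
            + p * ∫ ω, FB (fun j => χ j ω) ∂P := by
          rw [IH_integral_chi_mul hmeas hindep hvals hbern hp0 J n hnJ FA hFAm hdepA CA hFAbd,
            IH_integral_chi_mul hmeas hindep hvals hbern hp0 J n hnJ FB hFBm hdepB CA hFBbd]
      _ = ∫ ω, ((1-p) * FA (fun j => χ j ω) + p * FB (fun j => χ j ω)) ∂P := by
          rw [integral_add (hintA.const_mul _) (hintB.const_mul _),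
            integral_const_mul, integral_const_mul]
          ring
      _ ≤ ∫ ω, IH_G M c A lam a T' (fun j => χ j ω) ∂P := by
          apply integral_mono ((hintA.const_mul _).add (hintB.const_mul _)) hintG'
          intro ω
          have hfac' := hfac (IH_Y M c A n (fun j => χ j ω)) (IH_Y_nonneg hvals n ω) (hYd n ω)
          have hGpos : (0:ℝ) < IH_G M c A lam a T' (fun j => χ j ω) := IH_G_pos _
          simp only [hFA, hFB]
          calc (1-p) * (Real.exp (a * IH_Y M c A n (fun j => χ j ω))
                  * IH_G M c A lam a T' (fun j => χ j ω))
                + p * (Real.exp ((a - lam) * IH_Y M c A n (fun j => χ j ω))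
                  * IH_G M c A lam a T' (fun j => χ j ω))
              = ((1-p) * Real.exp (a * IH_Y M c A n (fun j => χ j ω))
                + p * Real.exp ((a - lam) * IH_Y M c A n (fun j => χ j ω)))
                * IH_G M c A lam a T' (fun j => χ j ω) := by ring
            _ ≤ 1 * IH_G M c A lam a T' (fun j => χ j ω) :=
                mul_le_mul_of_nonneg_right hfac' hGpos.le
            _ = IH_G M c A lam a T' (fun j => χ j ω) := one_mul _
      _ ≤ 1 := IH

end Core

section Markov

variable {Ω : Type} [MeasurableSpace Ω] {P : Measure Ω} [IsProbabilityMeasure P]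
  {p : ℝ} {χ : ℕ → Ω → ℝ}
  {M : ℕ} {c : (Fin (M+1) → ℕ) → ℝ} {A : Finset (Fin (M+1) → ℕ)}
  {lam a : ℝ}

lemma IH_markov (hp0 : 0 ≤ p) (hmeas : ∀ n, Measurable (χ n))
    (hindep : iIndepFun χ P)
    (hvals : ∀ n ω, χ n ω = 0 ∨ χ n ω = 1)
    (hbern : ∀ n, P {ω | χ n ω = 1} = ENNReal.ofReal p)
    (hA : ∀ α ∈ A, StrictMono α)
    (hlam : 0 ≤ lam) (ha : 0 ≤ a) {d2 : ℝ}
    (hYd : ∀ n ω, IH_Y M c A n (fun j => χ j ω) ≤ d2)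
    (hfac : ∀ Yv : ℝ, 0 ≤ Yv → Yv ≤ d2 →
      (1 - p) * Real.exp (a * Yv) + p * Real.exp ((a - lam) * Yv) ≤ 1)
    (T : Finset ℕ) (x y : ℝ) :
    (P {ω | (∑ k ∈ T, χ k ω * IH_Y M c A k (fun j => χ j ω)) ≤ x ∧
        y ≤ ∑ k ∈ T, IH_Y M c A k (fun j => χ j ω)}).toReal
      ≤ Real.exp (lam * x - a * y) := by
  classical
  have htupm := IH_tuple_measurable hmeas
  set Ψ : Ω → ℝ := fun ω => ∑ k ∈ T, χ k ω * IH_Y M c A k (fun j => χ j ω) with hΨ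
  set Z : Ω → ℝ := fun ω => ∑ k ∈ T, IH_Y M c A k (fun j => χ j ω) with hZ
  have hΨm : Measurable Ψ :=
    Finset.measurable_sum _ (fun k _ => (hmeas k).mul ((IH_Y_measurable k).comp htupm))
  have hZm : Measurable Z :=
    Finset.measurable_sum _ (fun k _ => (IH_Y_measurable k).comp htupm)
  set E : Set Ω := {ω | Ψ ω ≤ x ∧ y ≤ Z ω} with hEdef
  have hE : MeasurableSet E := by
    have : E = Ψ⁻¹' (Set.Iic x) ∩ Z⁻¹' (Set.Ici y) := rfl
    rw [this]
    exact (hΨm measurableSet_Iic).inter (hZm measurableSet_Ici)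
  have hGexp : ∀ ω, IH_G M c A lam a T (fun j => χ j ω)
      = Real.exp (a * Z ω - lam * Ψ ω) := by
    intro ω
    rw [IH_G, ← Real.exp_sum]
    congr 1
    calc ∑ k ∈ T, (a - lam * χ k ω) * IH_Y M c A k (fun j => χ j ω)
        = ∑ k ∈ T, (a * IH_Y M c A k (fun j => χ j ω)
            - lam * (χ k ω * IH_Y M c A k (fun j => χ j ω))) :=
          Finset.sum_congr rfl (fun k _ => by ring)
      _ = a * Z ω - lam * Ψ ω := by
          rw [Finset.sum_sub_distrib, ← Finset.mul_sum, ← Finset.mul_sum]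
  have hintG : Integrable (fun ω => IH_G M c A lam a T (fun j => χ j ω)) P :=
    IH_bounded_integrable (IH_G_measurable.comp htupm) (Real.exp (a*d2) ^ T.card)
      (fun ω => by
        rw [abs_of_nonneg (IH_G_pos _).le]
        exact IH_G_le hvals hlam ha hYd ω)
  have hpt : ∀ ω, E.indicator (fun _ => (1:ℝ)) ω
      ≤ Real.exp (lam * x - a * y) * IH_G M c A lam a T (fun j => χ j ω) := by
    intro ω
    by_cases hω : ω ∈ E
    · rw [Set.indicator_of_mem hω, hGexp ω, ← Real.exp_add]
      obtain ⟨h1, h2⟩ := hω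
      calc (1:ℝ) = Real.exp 0 := Real.exp_zero.symm
        _ ≤ Real.exp (lam * x - a * y + (a * Z ω - lam * Ψ ω)) := by
            apply Real.exp_le_exp.2
            have e1 : 0 ≤ lam * (x - Ψ ω) := mul_nonneg hlam (by linarith)
            have e2 : 0 ≤ a * (Z ω - y) := mul_nonneg ha (by linarith)
            nlinarith
    · rw [Set.indicator_of_notMem hω]
      exact mul_nonneg (Real.exp_pos _).le (IH_G_pos _).le
  have hind : ∫ ω, E.indicator (fun _ => (1:ℝ)) ω ∂P = (P E).toReal := by
    rw [MeasureTheory.integral_indicator_const _ hE]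
    simp [measureReal_def]
  calc (P E).toReal = ∫ ω, E.indicator (fun _ => (1:ℝ)) ω ∂P := hind.symm
    _ ≤ ∫ ω, Real.exp (lam * x - a * y) * IH_G M c A lam a T (fun j => χ j ω) ∂P := by
        apply integral_mono ((integrable_const (1:ℝ)).indicator hE) (hintG.const_mul _) hpt
    _ = Real.exp (lam * x - a * y) * ∫ ω, IH_G M c A lam a T (fun j => χ j ω) ∂P :=
        integral_const_mul _ _
    _ ≤ Real.exp (lam * x - a * y) * 1 := by
        apply mul_le_mul_of_nonneg_left
          (IH_core hp0 hmeas hindep hvals hbern hA hlam ha hYd hfac T) (Real.exp_pos _).le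
    _ = Real.exp (lam * x - a * y) := mul_one _

end Markov

section Decomp

variable {Ω : Type} {χ : ℕ → Ω → ℝ}

lemma IH_psi_decomp (M : ℕ) (c : (Fin (M+1) → ℕ) → ℝ) (A : Finset (Fin (M+1) → ℕ)) (ω : Ω) :
    ∑ n ∈ A.image (fun α => α 0), χ n ω * IH_Y M c A n (fun j => χ j ω)
      = ∑ α ∈ A, c α ^ 2 * ∏ i : Fin (M+1), χ (α i) ω := by
  classical
  unfold IH_Y
  rw [← Finset.sum_fiberwise_of_maps_to (g := fun α : Fin (M+1) → ℕ => α 0)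
    (fun α hα => Finset.mem_image_of_mem _ hα)
    (fun α => c α ^ 2 * ∏ i : Fin (M+1), χ (α i) ω)]
  refine Finset.sum_congr rfl fun n hn => ?_
  rw [Finset.mul_sum]
  refine Finset.sum_congr rfl fun α hα => ?_
  obtain ⟨_, hα0⟩ := Finset.mem_filter.1 hα
  rw [Fin.prod_univ_succ, ← hα0]
  ring

lemma IH_Z_decomp (M : ℕ) (c : (Fin (M+1) → ℕ) → ℝ) (A : Finset (Fin (M+1) → ℕ)) (ω : Ω) :
    ∑ n ∈ A.image (fun α => α 0), IH_Y M c A n (fun j => χ j ω)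
      = ∑ α ∈ A, c α ^ 2 * ∏ i : Fin M, χ (α i.succ) ω := by
  classical
  unfold IH_Y
  rw [← Finset.sum_fiberwise_of_maps_to (g := fun α : Fin (M+1) → ℕ => α 0)
    (fun α hα => Finset.mem_image_of_mem _ hα)
    (fun α => c α ^ 2 * ∏ i : Fin M, χ (α i.succ) ω)]

end Decomp

section Main

variable {Ω : Type} [MeasurableSpace Ω] {P : Measure Ω} [IsProbabilityMeasure P]
  {p : ℝ} {χ : ℕ → Ω → ℝ}

lemma IH_K_ge_one : (1:ℝ) ≤ 2 * Real.exp 3 / 9 := by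
  have h1 := Real.add_one_le_exp (1.5:ℝ)
  have h2 : Real.exp 3 = Real.exp 1.5 * Real.exp 1.5 := by
    rw [← Real.exp_add]; norm_num
  nlinarith [Real.exp_pos (1.5:ℝ)]

lemma IH_main (hp0 : 0 < p) (hp1 : p < 1) (hmeas : ∀ n, Measurable (χ n))
    (hindep : iIndepFun χ P)
    (hvals : ∀ n ω, χ n ω = 0 ∨ χ n ω = 1)
    (hbern : ∀ n, P {ω | χ n ω = 1} = ENNReal.ofReal p) :
    ∀ (N : ℕ) (c : (Fin (N+1) → ℕ) → ℝ), (Function.support c).Finite →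
    (∀ α : Fin (N+1) → ℕ, ¬ (StrictMono α ∧ ∀ i, 1 ≤ α i) → c α = 0) →
    ∀ d2 : ℝ, 0 < d2 →
    (∀ n : ℕ, ∑' α : {a : Fin (N+1) → ℕ // ∃ i, a i = n}, (c α)^2 ≤ d2) →
    ∀ x : ℝ, 0 < x → x < (p/2)^(N+1) * ∑' α : Fin (N+1) → ℕ, (c α)^2 →
    (P {ω | (∑' α : Fin (N+1) → ℕ, (c α)^2 * ∏ i, χ (α i) ω) ≤ x}).toReal
      ≤ (2 * Real.exp 3 / 9) * (N+1) *
          Real.exp (-(x^2 / (d2 * ∑' α : Fin (N+1) → ℕ, (c α)^2))) := by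
  intro N
  induction N with
  | zero =>
    intro c hsupp hincr d2 hd2 hrow x hx0 hx
    classical
    set A : Finset (Fin 1 → ℕ) := hsupp.toFinset with hA
    have hmemA : ∀ α, α ∈ A ↔ c α ≠ 0 := fun α => hsupp.mem_toFinset
    have hczero : ∀ α ∉ A, c α = 0 := fun α hα => by
      by_contra h; exact hα ((hmemA α).2 h)
    set S : ℝ := ∑ α ∈ A, c α ^ 2 with hSdef
    have htsum_eq : (∑' α : Fin 1 → ℕ, (c α)^2) = S :=
      tsum_eq_sum (fun α hα => by rw [hczero α hα]; ring)
    have hAmono : ∀ α ∈ A, StrictMono α := by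
      intro α hα
      by_contra h
      exact (hmemA α).1 hα (hincr α (fun hc => h hc.1))
    rw [htsum_eq] at hx ⊢
    rw [pow_one] at hx
    have hSpos : 0 < S := by
      rcases le_or_gt S 0 with h | h
      · exfalso; nlinarith
      · exact h
    -- row bounds in finset form
    have hsupp2 : (Function.support (fun α => c α ^ 2)).Finite :=
      hsupp.subset (fun α hα => by
        simp only [Function.mem_support] at hα ⊢
        exact fun h => hα (by rw [h]; ring))
    have hrowF : ∀ n, ∑ α ∈ A.filter (fun α => α 0 = n), c α ^ 2 ≤ d2 := by
      intro n
      refine (IH_sum_le_tsum_subtype (fun α => c α ^2) (fun α => sq_nonneg _) hsupp2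
        (fun a => ∃ i, a i = n) _ ?_).trans (hrow n)
      intro α hα
      exact ⟨0, (Finset.mem_filter.1 hα).2⟩
    have hYd : ∀ n ω, IH_Y 0 c A n (fun j => χ j ω) ≤ d2 :=
      fun n ω => (IH_Y_le hvals n ω).trans (hrowF n)
    set Tn : Finset ℕ := A.image (fun α => α 0) with hTn
    -- Z is constant S
    have hZS : ∀ ω, ∑ n ∈ Tn, IH_Y 0 c A n (fun j => χ j ω) = S := by
      intro ω
      rw [IH_Z_decomp 0 c A ω]
      refine Finset.sum_congr rfl fun α _ => ?_
      simp
    -- rewrite the event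
    have hptw : ∀ ω : Ω, (∑' α : Fin 1 → ℕ, (c α)^2 * ∏ i, χ (α i) ω)
        = ∑ n ∈ Tn, χ n ω * IH_Y 0 c A n (fun j => χ j ω) := by
      intro ω
      rw [IH_psi_decomp 0 c A ω]
      exact tsum_eq_sum (fun α hα => by rw [hczero α hα]; ring)
    have hevent : {ω | (∑' α : Fin 1 → ℕ, (c α)^2 * ∏ i, χ (α i) ω) ≤ x}
        = {ω | (∑ n ∈ Tn, χ n ω * IH_Y 0 c A n (fun j => χ j ω)) ≤ x ∧
            S ≤ ∑ n ∈ Tn, IH_Y 0 c A n (fun j => χ j ω)} := by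
      ext ω
      simp only [Set.mem_setOf_eq, hptw ω, hZS ω, le_refl, and_true]
    rw [hevent]
    -- Markov with optimized lambda
    set t : ℝ := p * S - x with ht
    have hxt : x < t := by nlinarith
    have ht0 : 0 < t := lt_trans hx0 hxt
    set lam : ℝ := 4 * t / (d2 * S) with hlam_def
    set a : ℝ := lam * p - lam^2 * d2 / 8 with ha_def
    have hlam : 0 ≤ lam := by positivity
    have hld : lam * d2 / 8 = t / (2*S) := by
      rw [hlam_def]; field_simp; ring
    have ha : 0 ≤ a := by
      rw [ha_def]
      have h1 : lam * (lam * d2 / 8) ≤ lam * p := by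
        rw [hld]
        apply mul_le_mul_of_nonneg_left _ hlam
        rw [div_le_iff₀ (by positivity)]
        nlinarith
      nlinarith [h1]
    have hfac : ∀ Yv : ℝ, 0 ≤ Yv → Yv ≤ d2 →
        (1 - p) * Real.exp (a * Yv) + p * Real.exp ((a - lam) * Yv) ≤ 1 :=
      fun Yv h1 h2 => IH_key_factor p lam a d2 Yv hp0.le hp1 hlam ha_def h1 h2
    have hmark := IH_markov hp0.le hmeas hindep hvals hbern hAmono hlam ha hYd hfac Tn x S
    refine hmark.trans ?_
    -- numeric bound
    have harith : lam * x - a * S ≤ -(x^2 / (d2 * S)) := by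
      have hexp : lam * x - a * S = -(2 * t^2) / (d2 * S) := by
        rw [ha_def, hlam_def]
        field_simp
        ring
      rw [hexp, neg_div, neg_le_neg_iff]
      gcongr
      nlinarith
    refine (Real.exp_le_exp.2 harith).trans ?_
    push_cast
    nlinarith [IH_K_ge_one, (Real.exp_pos (-(x^2 / (d2 * S)))).le,
      Real.exp_pos (-(x^2 / (d2 * S)))]
  | succ N IHN =>
    intro c hsupp hincr d2 hd2 hrow x hx0 hx
    classical
    set A : Finset (Fin (N+2) → ℕ) := hsupp.toFinset with hA
    have hmemA : ∀ α, α ∈ A ↔ c α ≠ 0 := fun α => hsupp.mem_toFinset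
    have hczero : ∀ α ∉ A, c α = 0 := fun α hα => by
      by_contra h; exact hα ((hmemA α).2 h)
    set S : ℝ := ∑ α ∈ A, c α ^ 2 with hSdef
    have htsum_eq : (∑' α : Fin (N+2) → ℕ, (c α)^2) = S :=
      tsum_eq_sum (fun α hα => by rw [hczero α hα]; ring)
    have hAprop : ∀ α ∈ A, StrictMono α ∧ ∀ i, 1 ≤ α i := by
      intro α hα; by_contra h; exact (hmemA α).1 hα (hincr α h)
    have hAmono : ∀ α ∈ A, StrictMono α := fun α hα => (hAprop α hα).1
    rw [htsum_eq] at hx ⊢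
    have hSpos : 0 < S := by
      rcases le_or_gt S 0 with h | h
      · exfalso
        have hq : (0:ℝ) < (p/2)^(N+2) := pow_pos (by linarith) _
        nlinarith
      · exact h
    have hxpS : x < p * S := by
      have h1 : (p/2)^(N+2) ≤ p/2 :=
        pow_le_of_le_one (by linarith) (by linarith) (by omega)
      nlinarith
    have hsupp2 : (Function.support (fun α => c α ^ 2)).Finite :=
      hsupp.subset (fun α hα => by
        simp only [Function.mem_support] at hα ⊢
        exact fun h => hα (by rw [h]; ring))
    have hrowF : ∀ n, ∑ α ∈ A.filter (fun α => α 0 = n), c α ^ 2 ≤ d2 := by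
      intro n
      refine (IH_sum_le_tsum_subtype (fun α => c α ^2) (fun α => sq_nonneg _) hsupp2
        (fun a => ∃ i, a i = n) _ ?_).trans (hrow n)
      intro α hα
      exact ⟨0, (Finset.mem_filter.1 hα).2⟩
    have hYd : ∀ n ω, IH_Y (N+1) c A n (fun j => χ j ω) ≤ d2 :=
      fun n ω => (IH_Y_le hvals n ω).trans (hrowF n)
    set Tn : Finset ℕ := A.image (fun α => α 0) with hTn
    -- the reduced coefficient family
    set d : (Fin (N+1) → ℕ) → ℝ :=
      fun β => Real.sqrt (∑ α ∈ A.filter (fun α => Fin.tail α = β), c α ^ 2) with hd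
    have hd_sq : ∀ β, d β ^ 2
        = ∑ α ∈ A.filter (fun α => Fin.tail α = β), c α ^ 2 := fun β =>
      Real.sq_sqrt (Finset.sum_nonneg fun α _ => sq_nonneg _)
    have hd_zero : ∀ β, β ∉ A.image Fin.tail → d β = 0 := by
      intro β hβ
      have he : A.filter (fun α => Fin.tail α = β) = ∅ := by
        rw [Finset.filter_eq_empty_iff]
        intro α hα hταβ
        exact hβ (Finset.mem_image.2 ⟨α, hα, hταβ⟩)
      simp [hd, he]
    have hsuppd : (Function.support d).Finite := by
      apply Set.Finite.subset (A.image Fin.tail).finite_toSet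
      intro β hβ
      by_contra h
      exact hβ (hd_zero β (by simpa using h))
    have hincrd : ∀ β : Fin (N+1) → ℕ, ¬(StrictMono β ∧ ∀ i, 1 ≤ β i) → d β = 0 := by
      intro β hβ
      have he : A.filter (fun α => Fin.tail α = β) = ∅ := by
        rw [Finset.filter_eq_empty_iff]
        intro α hα hταβ
        obtain ⟨hm, hge⟩ := hAprop α hα
        apply hβ
        subst hταβ
        constructor
        · intro i j hij
          exact hm (by simpa [Fin.succ_lt_succ_iff] using hij)
        · intro i; exact hge i.succ
      simp [hd, he]
    have htsum_d : (∑' β : Fin (N+1) → ℕ, (d β)^2) = S := by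
      rw [tsum_eq_sum (s := A.image Fin.tail) (fun β hβ => by rw [hd_zero β hβ]; ring)]
      rw [Finset.sum_congr rfl (fun β _ => hd_sq β)]
      exact Finset.sum_fiberwise_of_maps_to (fun α hα => Finset.mem_image_of_mem _ hα) _
    have hrowd : ∀ m, ∑' β : {b : Fin (N+1) → ℕ // ∃ i, b i = m}, (d β)^2 ≤ d2 := by
      intro m
      rw [IH_tsum_subtype_eq (fun β => d β ^2) (fun b => ∃ i, b i = m) (A.image Fin.tail)
        (fun β h => by
          by_contra hβ
          apply h
          show d β ^ 2 = 0
          rw [hd_zero β hβ]; ring)]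
      set A' := A.filter (fun α => ∃ i : Fin (N+1), Fin.tail α i = m) with hA'
      have e1 : ∑ β ∈ (A.image Fin.tail).filter (fun b => ∃ i, b i = m), d β ^2
          = ∑ α ∈ A', c α ^2 := by
        calc ∑ β ∈ (A.image Fin.tail).filter (fun b => ∃ i, b i = m), d β ^2
            = ∑ β ∈ (A.image Fin.tail).filter (fun b => ∃ i, b i = m),
                ∑ α ∈ A'.filter (fun α => Fin.tail α = β), c α ^2 := by
              refine Finset.sum_congr rfl fun β hβ => ?_
              rw [hd_sq β]
              obtain ⟨hβim, hβm⟩ := Finset.mem_filter.1 hβ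
              congr 1
              apply Finset.ext
              intro α
              simp only [Finset.mem_filter, hA']
              constructor
              · rintro ⟨hαA, hτ⟩
                exact ⟨⟨hαA, by rw [hτ]; exact hβm⟩, hτ⟩
              · rintro ⟨⟨hαA, _⟩, hτ⟩; exact ⟨hαA, hτ⟩
          _ = ∑ α ∈ A', c α ^2 := by
              apply Finset.sum_fiberwise_of_maps_to
              intro α hα
              obtain ⟨hαA, hm2⟩ := Finset.mem_filter.1 hα
              exact Finset.mem_filter.2 ⟨Finset.mem_image_of_mem _ hαA, hm2⟩
      rw [e1]
      refine (IH_sum_le_tsum_subtype (fun α => c α ^2) (fun α => sq_nonneg _) hsupp2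
        (fun a : Fin (N+2) → ℕ => ∃ i, a i = m) _ ?_).trans (hrow m)
      intro α hα
      obtain ⟨hαA, ⟨i, hi⟩⟩ := Finset.mem_filter.1 hα
      exact ⟨i.succ, hi⟩
    have hZd : ∀ ω, (∑' β : Fin (N+1) → ℕ, (d β)^2 * ∏ i, χ (β i) ω)
        = ∑ n ∈ Tn, IH_Y (N+1) c A n (fun j => χ j ω) := by
      intro ω
      rw [IH_Z_decomp (N+1) c A ω]
      rw [tsum_eq_sum (s := A.image Fin.tail)
        (fun β hβ => by rw [hd_zero β hβ]; ring)]
      calc ∑ β ∈ A.image Fin.tail, d β ^2 * ∏ i, χ (β i) ω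
          = ∑ β ∈ A.image Fin.tail, ∑ α ∈ A.filter (fun α => Fin.tail α = β),
              c α ^2 * ∏ i : Fin (N+1), χ (α i.succ) ω := by
            refine Finset.sum_congr rfl fun β hβ => ?_
            rw [hd_sq β, Finset.sum_mul]
            refine Finset.sum_congr rfl fun α hα => ?_
            obtain ⟨_, hτ⟩ := Finset.mem_filter.1 hα
            congr 1
            refine Finset.prod_congr rfl fun i _ => ?_
            rw [← hτ]
            rfl
        _ = ∑ α ∈ A, c α ^2 * ∏ i : Fin (N+1), χ (α i.succ) ω :=
            Finset.sum_fiberwise_of_maps_to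
              (fun α hα => Finset.mem_image_of_mem _ hα) _
    have hptw : ∀ ω : Ω, (∑' α : Fin (N+2) → ℕ, (c α)^2 * ∏ i, χ (α i) ω)
        = ∑ n ∈ Tn, χ n ω * IH_Y (N+1) c A n (fun j => χ j ω) := by
      intro ω
      rw [IH_psi_decomp (N+1) c A ω]
      exact tsum_eq_sum (fun α hα => by rw [hczero α hα]; ring)
    set y : ℝ := 2*x/p with hy
    have hy0 : 0 < y := by positivity
    set E1 : Set Ω := {ω | (∑' β : Fin (N+1) → ℕ, (d β)^2 * ∏ i, χ (β i) ω) ≤ y}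
      with hE1def
    set E2 : Set Ω := {ω | (∑ k ∈ Tn, χ k ω * IH_Y (N+1) c A k (fun j => χ j ω)) ≤ x ∧
        y ≤ ∑ k ∈ Tn, IH_Y (N+1) c A k (fun j => χ j ω)} with hE2def
    have hevent : {ω | (∑' α : Fin (N+2) → ℕ, (c α)^2 * ∏ i, χ (α i) ω) ≤ x}
        ⊆ E1 ∪ E2 := by
      intro ω hω
      rw [Set.mem_setOf_eq, hptw ω] at hω
      rcases le_total (∑ k ∈ Tn, IH_Y (N+1) c A k (fun j => χ j ω)) y with h | h
      · left
        rw [hE1def, Set.mem_setOf_eq, hZd ω]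
        exact h
      · right
        exact ⟨hω, h⟩
    have hsplit2 : (P {ω | (∑' α : Fin (N+2) → ℕ, (c α)^2 * ∏ i, χ (α i) ω) ≤ x}).toReal
        ≤ (P E1).toReal + (P E2).toReal := by
      have h1 := (measure_mono hevent).trans (measure_union_le (μ := P) E1 E2)
      calc (P {ω | (∑' α : Fin (N+2) → ℕ, (c α)^2 * ∏ i, χ (α i) ω) ≤ x}).toReal
          ≤ ((P E1) + (P E2)).toReal := ENNReal.toReal_mono
            (ENNReal.add_ne_top.2 ⟨measure_ne_top P E1, measure_ne_top P E2⟩) h1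
        _ = (P E1).toReal + (P E2).toReal :=
            ENNReal.toReal_add (measure_ne_top P E1) (measure_ne_top P E2)
    -- bound on E1 via the inductive hypothesis
    have hyx : y < (p/2)^(N+1) * ∑' β : Fin (N+1) → ℕ, (d β)^2 := by
      rw [htsum_d, hy, div_lt_iff₀ hp0]
      rw [pow_succ] at hx
      nlinarith
    have hE1b := IHN d hsuppd hincrd d2 hd2 hrowd y hy0 hyx
    rw [htsum_d] at hE1b
    have hxy2 : x^2 ≤ y^2 := by
      have : x ≤ y := by
        rw [hy, le_div_iff₀ hp0]
        nlinarith
      nlinarith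
    have hE1' : (P E1).toReal
        ≤ (2 * Real.exp 3 / 9) * ((N:ℝ)+1) * Real.exp (-(x^2 / (d2 * S))) := by
      refine hE1b.trans ?_
      apply mul_le_mul_of_nonneg_left _ (by positivity)
      apply Real.exp_le_exp.2
      rw [neg_le_neg_iff]
      gcongr
    -- bound on E2 via Markov
    set lam : ℝ := 2*p/d2 with hlam_def
    set a : ℝ := lam * p - lam^2 * d2 / 8 with ha_def
    have hlam : 0 ≤ lam := by positivity
    have ha32 : a = 3*p^2/(2*d2) := by
      rw [ha_def, hlam_def]; field_simp; ring
    have ha : 0 ≤ a := by rw [ha32]; positivity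
    have hfac : ∀ Yv : ℝ, 0 ≤ Yv → Yv ≤ d2 →
        (1 - p) * Real.exp (a * Yv) + p * Real.exp ((a - lam) * Yv) ≤ 1 :=
      fun Yv h1 h2 => IH_key_factor p lam a d2 Yv hp0.le hp1 hlam ha_def h1 h2
    have hmark := IH_markov hp0.le hmeas hindep hvals hbern hAmono hlam ha hYd hfac Tn x y
    have harr : lam * x - a * y = -(p*x/d2) := by
      rw [ha32, hlam_def, hy]
      field_simp
      ring
    have hE2' : (P E2).toReal ≤ Real.exp (-(x^2 / (d2 * S))) := by
      refine hmark.trans ?_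
      apply Real.exp_le_exp.2
      rw [harr, neg_le_neg_iff, div_le_div_iff₀ (by positivity) hd2]
      nlinarith [mul_nonneg (mul_nonneg hx0.le hd2.le) (sub_pos.2 hxpS).le]
    -- combine
    push_cast
    refine hsplit2.trans ?_
    have hE2'' : (P E2).toReal
        ≤ (2 * Real.exp 3 / 9) * 1 * Real.exp (-(x^2 / (d2 * S))) := by
      refine hE2'.trans ?_
      nlinarith [IH_K_ge_one, (Real.exp_pos (-(x^2 / (d2 * S)))).le]
    calc (P E1).toReal + (P E2).toReal
        ≤ (2 * Real.exp 3 / 9) * ((N:ℝ)+1) * Real.exp (-(x^2 / (d2 * S)))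
          + (2 * Real.exp 3 / 9) * 1 * Real.exp (-(x^2 / (d2 * S))) := add_le_add hE1' hE2''
      _ = (2 * Real.exp 3 / 9) * ((N:ℝ)+1+1) * Real.exp (-(x^2 / (d2 * S))) := by
          ring


end Main

theorem iterated_hoeffding
    (N : ℕ) (p : ℝ) (hp0 : 0 < p) (hp1 : p < 1)
    (Ω : Type) [MeasurableSpace Ω] (P : Measure Ω) [IsProbabilityMeasure P]
    (χ : ℕ → Ω → ℝ)
    (hmeas : ∀ n, Measurable (χ n))
    (hindep : iIndepFun χ P)
    (hvals : ∀ n ω, χ n ω = 0 ∨ χ n ω = 1)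
    (hbern : ∀ n, P {ω | χ n ω = 1} = ENNReal.ofReal p)
    (c : (Fin N → ℕ) → ℝ)
    (hsupp : (Function.support c).Finite)
    (hincr : ∀ α : Fin N → ℕ, ¬ (StrictMono α ∧ ∀ i, 1 ≤ α i) → c α = 0)
    (x : ℝ) (hx0 : 0 < x)
    (hx : x < (p / 2) ^ N * ∑' α : Fin N → ℕ, (c α) ^ 2) :
    (P {ω | (∑' α : Fin N → ℕ, (c α) ^ 2 * ∏ i, χ (α i) ω) ≤ x}).toReal ≤
      (2 * Real.exp 3 / 9) * N *
        Real.exp (-(x ^ 2 /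
          ((⨆ n : ℕ, ∑' α : {a : Fin N → ℕ // ∃ i, a i = n}, (c α) ^ 2) *
            ∑' α : Fin N → ℕ, (c α) ^ 2))) := by
  classical
  cases N with
  | zero =>
    have hset : {ω | (∑' α : Fin 0 → ℕ, (c α)^2 * ∏ i, χ (α i) ω) ≤ x} = ∅ := by
      ext ω
      simp only [Set.mem_setOf_eq, Set.mem_empty_iff_false, iff_false, not_le]
      have he : (∑' α : Fin 0 → ℕ, (c α)^2 * ∏ i : Fin 0, χ (α i) ω)
          = ∑' α : Fin 0 → ℕ, (c α)^2 := by
        apply tsum_congr; intro α; simp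
      rw [he]
      rw [pow_zero, one_mul] at hx
      linarith
    rw [hset]
    simp
  | succ M =>
    set row : ℕ → ℝ := fun n => ∑' α : {a : Fin (M+1) → ℕ // ∃ i, a i = n}, (c α)^2
      with hrowdef
    have hsupp2 : (Function.support fun α : Fin (M+1) → ℕ => c α ^ 2).Finite :=
      hsupp.subset (fun α hα => by
        simp only [Function.mem_support] at hα ⊢
        exact fun h => hα (by rw [h]; ring))
    have hsummable : Summable (fun α : Fin (M+1) → ℕ => c α ^2) := IH_summable hsupp2
    have hrow_le_S : ∀ n, row n ≤ ∑' α : Fin (M+1) → ℕ, (c α)^2 := by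
      intro n
      have h0 : row n = ∑' α : {a : Fin (M+1) → ℕ // ∃ i, a i = n}, (c α)^2 := by
        rw [hrowdef]
      have h1 : (∑' α : {a : Fin (M+1) → ℕ // ∃ i, a i = n}, (c α)^2)
          = ∑' α : Fin (M+1) → ℕ,
            Set.indicator {a : Fin (M+1) → ℕ | ∃ i, a i = n} (fun α => c α ^2) α :=
        tsum_subtype {a : Fin (M+1) → ℕ | ∃ i, a i = n} (fun α => c α ^2)
      rw [h0, h1]
      have hsumind : Summable ({a : Fin (M+1) → ℕ | ∃ i, a i = n}.indicator
          (fun α => c α ^2)) := by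
        apply IH_summable
        refine hsupp2.subset fun α hα => ?_
        by_cases hQ : α ∈ {a : Fin (M+1) → ℕ | ∃ i, a i = n}
        · rwa [Function.mem_support, Set.indicator_of_mem hQ] at hα
        · rw [Function.mem_support, Set.indicator_of_notMem hQ] at hα
          exact absurd rfl hα
      apply Summable.tsum_le_tsum _ hsumind hsummable
      intro α
      exact Set.indicator_apply_le' (fun _ => le_rfl) (fun _ => sq_nonneg _)
    have hbdd : BddAbove (Set.range row) :=
      ⟨∑' α : Fin (M+1) → ℕ, (c α)^2, by rintro _ ⟨n, rfl⟩; exact hrow_le_S n⟩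
    have hrow_le : ∀ n, row n ≤ ⨆ n, row n := fun n => le_ciSup hbdd n
    have hSpos' : 0 < ∑' α : Fin (M+1) → ℕ, (c α)^2 := by
      by_contra h
      push_neg at h
      nlinarith [pow_pos (show (0:ℝ) < p/2 by linarith) (M+1)]
    have hex : ∃ α : Fin (M+1) → ℕ, c α ≠ 0 := by
      by_contra h
      push_neg at h
      have hz : (∑' α : Fin (M+1) → ℕ, (c α)^2) = 0 := by
        have : ∀ α : Fin (M+1) → ℕ, (c α)^2 = 0 := fun α => by rw [h α]; ring
        rw [tsum_congr this, tsum_zero]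
      nlinarith
    obtain ⟨α₀, hα₀⟩ := hex
    have hδpos : 0 < ⨆ n, row n := by
      have h1 : c α₀ ^2 ≤ row (α₀ 0) := by
        have h0 : row (α₀ 0) = ∑' α : {a : Fin (M+1) → ℕ // ∃ i, a i = α₀ 0}, (c α)^2 := by
          rw [hrowdef]
        rw [h0]
        have hsub : Summable (fun α : {a : Fin (M+1) → ℕ // ∃ i, a i = α₀ 0} => (c α)^2) :=
          hsummable.subtype _
        exact Summable.le_tsum hsub ⟨α₀, ⟨0, rfl⟩⟩ (fun β _ => sq_nonneg _)
      have h2 : 0 < c α₀ ^2 := by positivity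
      linarith [hrow_le (α₀ 0)]
    have hmain := IH_main hp0 hp1 hmeas hindep hvals hbern M c hsupp hincr
      (⨆ n, row n) hδpos (fun n => hrow_le n) x hx0 hx
    push_cast
    push_cast at hmain
    exact hmain

end
end

section
/- There exists a constant C > 0 such that for every integer n ≥ 2: Σ_{1≤i,j≤n, i≠j} ( Σ_{1≤k≤n, k≠i, k≠j} 1/√(|i−k|·|j−k|) )² ≤ C n². (Equivalently: the squared fourth-cumulant quantity κ²(c_n) = (1/(4n² ln²n)) Σ_{i≠j} (Σ_{k≠i,j} (|i−k||j−k|)^{−1/2})² associated to the coefficients c_n(i,j) = 1_{{i≠j}} (2n ln n)^{−1/2} |i−j|^{−1/2} satisfies κ²(c_n) ≤ C/ln²n.) -/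
open Real Finset

lemma sum_rpow_le {c : ℝ} (hc : 0 < c) (hc1 : c < 1) (n : ℕ) :
    ∑ t ∈ Finset.Icc 1 n, (t : ℝ) ^ (c - 1) ≤ (n : ℝ) ^ c / c := by
  induction n with
  | zero => simp [Real.zero_rpow hc.ne']
  | succ n ih =>
    rw [Finset.sum_Icc_succ_top (by omega : 1 ≤ n + 1)]
    have hn1 : (0:ℝ) < (n:ℝ) + 1 := by positivity
    have key : (n:ℝ) ^ c + c * ((n:ℝ)+1) ^ (c - 1) ≤ ((n:ℝ)+1) ^ c := by
      have h1 : ((n:ℝ)+1) ^ (1 - c) * (n:ℝ) ^ c ≤ (1 - c) * ((n:ℝ)+1) + c * n :=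
        Real.geom_mean_le_arith_mean2_weighted (by linarith) hc.le hn1.le n.cast_nonneg (by ring)
      have h2 : ((n:ℝ)+1) ^ (c-1) * (((n:ℝ)+1) ^ (1-c) * (n:ℝ)^c)
          ≤ ((n:ℝ)+1) ^ (c-1) * ((1-c) * ((n:ℝ)+1) + c * n) :=
        mul_le_mul_of_nonneg_left h1 (by positivity)
      have h3 : ((n:ℝ)+1) ^ (c-1) * ((n:ℝ)+1) ^ (1-c) = 1 := by
        rw [← Real.rpow_add hn1]; norm_num
      have h4 : ((n:ℝ)+1) ^ (c-1) * ((n:ℝ)+1) = ((n:ℝ)+1) ^ c := by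
        nth_rewrite 2 [← Real.rpow_one ((n:ℝ)+1)]
        rw [← Real.rpow_add hn1]; ring_nf
      calc (n:ℝ) ^ c + c * ((n:ℝ)+1) ^ (c - 1)
          = ((n:ℝ)+1) ^ (c-1) * (((n:ℝ)+1) ^ (1-c) * (n:ℝ)^c) + c * ((n:ℝ)+1) ^ (c-1) := by
            rw [← mul_assoc, h3, one_mul]
        _ ≤ ((n:ℝ)+1) ^ (c-1) * ((1-c) * ((n:ℝ)+1) + c * n) + c * ((n:ℝ)+1) ^ (c-1) := by linarith
        _ = ((n:ℝ)+1) ^ (c-1) * ((n:ℝ)+1) := by ring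
        _ = ((n:ℝ)+1) ^ c := h4
    have hcast : ((n+1 : ℕ) : ℝ) = (n:ℝ) + 1 := by push_cast; ring
    rw [hcast]
    have key2 : ((n:ℝ)^c + c * ((n:ℝ)+1)^(c-1))/c ≤ ((n:ℝ)+1)^c/c := by gcongr
    have e : ((n:ℝ)^c + c*((n:ℝ)+1)^(c-1))/c = (n:ℝ)^c/c + ((n:ℝ)+1)^(c-1) := by
      field_simp
    linarith [e ▸ key2]



lemma sumB {c : ℝ} (hc : 0 < c) (hc1 : c < 1) {n i : ℕ} (hi1 : 1 ≤ i) (hi : i ≤ n) :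
    ∑ k ∈ Finset.Icc 1 n, (if k ≠ i then |(i:ℝ) - k| ^ (c-1) else 0) ≤ 2 * ((n : ℝ) ^ c / c) := by
  have hsplit : ∑ k ∈ Finset.Icc 1 n, (if k ≠ i then |(i:ℝ) - k| ^ (c-1) else 0)
      = (∑ k ∈ Finset.Icc 1 (i-1), (if k ≠ i then |(i:ℝ) - k| ^ (c-1) else 0))
        + (if (i:ℕ) ≠ i then |(i:ℝ) - i| ^ (c-1) else 0)
        + ∑ k ∈ Finset.Ioc i n, (if k ≠ i then |(i:ℝ) - k| ^ (c-1) else 0) := by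
    have h2 : Finset.Icc 1 n = Finset.Icc 1 i ∪ Finset.Ioc i n := by
      ext x; simp [Finset.mem_Icc, Finset.mem_Ioc, Finset.mem_union]; omega
    have hdisj : Disjoint (Finset.Icc 1 i) (Finset.Ioc i n) := by
      rw [Finset.disjoint_left]; intro a ha hb
      simp [Finset.mem_Icc] at ha
      simp [Finset.mem_Ioc] at hb
      omega
    rw [h2, Finset.sum_union hdisj]
    have h1 : i - 1 + 1 = i := by omega
    have h3 : ∑ k ∈ Finset.Icc 1 i, (if k ≠ i then |(i:ℝ) - k| ^ (c-1) else 0)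
        = (∑ k ∈ Finset.Icc 1 (i-1), (if k ≠ i then |(i:ℝ) - k| ^ (c-1) else 0))
          + (if (i:ℕ) ≠ i then |(i:ℝ) - i| ^ (c-1) else 0) := by
      rw [← h1, Finset.sum_Icc_succ_top (by omega : 1 ≤ (i-1) + 1)]
      simp
    rw [h3]
  rw [hsplit]
  simp only [ne_eq, not_true_eq_false, if_false]
  have part1 : ∑ k ∈ Finset.Icc 1 (i-1), (if k ≠ i then |(i:ℝ) - k| ^ (c-1) else 0)
      ≤ (n : ℝ) ^ c / c := by
    have e : ∑ k ∈ Finset.Icc 1 (i-1), (if k ≠ i then |(i:ℝ) - k| ^ (c-1) else 0)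
        = ∑ t ∈ Finset.Icc 1 (i-1), (t : ℝ) ^ (c-1) := by
      refine Finset.sum_nbij' (fun k => i - k) (fun t => i - t) ?_ ?_ ?_ ?_ ?_
      · intro a ha; simp [Finset.mem_Icc] at *; omega
      · intro a ha; simp [Finset.mem_Icc] at *; omega
      · intro a ha; simp [Finset.mem_Icc] at *; omega
      · intro a ha; simp [Finset.mem_Icc] at *; omega
      · intro a ha
        simp only [Finset.mem_Icc] at ha
        have hne : a ≠ i := by omega
        rw [if_pos hne]
        have : |(i:ℝ) - a| = ((i - a : ℕ) : ℝ) := by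
          rw [Nat.cast_sub (by omega)]
          rw [abs_of_nonneg]
          have : (a:ℝ) ≤ (i:ℝ) := by exact_mod_cast (by omega : a ≤ i)
          linarith
        rw [this]
      
    calc _ = ∑ t ∈ Finset.Icc 1 (i-1), (t : ℝ) ^ (c-1) := e
      _ ≤ ∑ t ∈ Finset.Icc 1 n, (t : ℝ) ^ (c-1) := by
          apply Finset.sum_le_sum_of_subset_of_nonneg
          · apply Finset.Icc_subset_Icc_right; omega
          · intro t _ _; positivity
      _ ≤ (n : ℝ) ^ c / c := sum_rpow_le hc hc1 n
  have part2 : ∑ k ∈ Finset.Ioc i n, (if k ≠ i then |(i:ℝ) - k| ^ (c-1) else 0)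
      ≤ (n : ℝ) ^ c / c := by
    have e : ∑ k ∈ Finset.Ioc i n, (if k ≠ i then |(i:ℝ) - k| ^ (c-1) else 0)
        = ∑ t ∈ Finset.Icc 1 (n-i), (t : ℝ) ^ (c-1) := by
      refine Finset.sum_nbij' (fun k => k - i) (fun t => t + i) ?_ ?_ ?_ ?_ ?_
      · intro a ha; simp [Finset.mem_Icc, Finset.mem_Ioc] at *; omega
      · intro a ha; simp [Finset.mem_Icc, Finset.mem_Ioc] at *; omega
      · intro a ha; simp only [Finset.mem_Icc, Finset.mem_Ioc] at ha; omega
      · intro a ha; simp only [Finset.mem_Icc, Finset.mem_Ioc] at ha; omega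
      · intro a ha
        simp only [Finset.mem_Ioc] at ha
        have hne : a ≠ i := by omega
        rw [if_pos hne]
        have : |(i:ℝ) - a| = ((a - i : ℕ) : ℝ) := by
          rw [Nat.cast_sub (by omega)]
          rw [abs_sub_comm, abs_of_nonneg]
          have : (i:ℝ) ≤ (a:ℝ) := by exact_mod_cast (by omega : i ≤ a)
          linarith
        rw [this]
    calc _ = ∑ t ∈ Finset.Icc 1 (n-i), (t : ℝ) ^ (c-1) := e
      _ ≤ ∑ t ∈ Finset.Icc 1 n, (t : ℝ) ^ (c-1) := by
          apply Finset.sum_le_sum_of_subset_of_nonneg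
          · apply Finset.Icc_subset_Icc_right; omega
          · intro t _ _; positivity
      _ ≤ (n : ℝ) ^ c / c := sum_rpow_le hc hc1 n
  linarith

lemma pt_aux {a b d : ℝ} (ha : 1 ≤ a) (hab : a ≤ b) (hd : 0 < d) (hdb : d ≤ 2*b) :
    1 / Real.sqrt (a*b) ≤ 2 * d ^ (-(1/4):ℝ) * a ^ (-(3/4):ℝ) := by
  have ha0 : 0 < a := by linarith
  have hb0 : 0 < b := by linarith
  -- key : √d * (a * √a) ≤ 4 * (a * b)
  have key : Real.sqrt d * (a * Real.sqrt a) ≤ 4 * (a * b) := by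
    have h1 : Real.sqrt d ≤ Real.sqrt (2*b) := Real.sqrt_le_sqrt (by linarith)
    have h2 : Real.sqrt a ≤ Real.sqrt b := Real.sqrt_le_sqrt (by linarith)
    have h3 : Real.sqrt d * Real.sqrt a ≤ Real.sqrt (2*b) * Real.sqrt b :=
      mul_le_mul h1 h2 (Real.sqrt_nonneg a) (Real.sqrt_nonneg _)
    have h4 : Real.sqrt (2*b) * Real.sqrt b = Real.sqrt 2 * b := by
      rw [Real.sqrt_mul (by norm_num) b, mul_assoc, Real.mul_self_sqrt hb0.le]
    have h5 : Real.sqrt 2 ≤ 4 := by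
      rw [show (4:ℝ) = Real.sqrt 16 by rw [show (16:ℝ) = 4^2 by norm_num, Real.sqrt_sq (by norm_num)]]
      exact Real.sqrt_le_sqrt (by norm_num)
    calc Real.sqrt d * (a * Real.sqrt a) = (Real.sqrt d * Real.sqrt a) * a := by ring
      _ ≤ (Real.sqrt 2 * b) * a := by
          rw [← h4]; exact mul_le_mul_of_nonneg_right h3 ha0.le
      _ ≤ (4 * b) * a := by
          have := mul_le_mul_of_nonneg_right h5 (le_of_lt (mul_pos hb0 ha0))
          nlinarith
      _ = 4 * (a * b) := by ring
  -- take square roots: d^(1/4) * a^(3/4) ≤ 2 * √(a*b)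
  have key2 : d ^ ((1:ℝ)/4) * a ^ ((3:ℝ)/4) ≤ 2 * Real.sqrt (a*b) := by
    have e1 : Real.sqrt (Real.sqrt d * (a * Real.sqrt a)) = d ^ ((1:ℝ)/4) * a ^ ((3:ℝ)/4) := by
      rw [Real.sqrt_mul (Real.sqrt_nonneg d)]
      congr 1
      · rw [Real.sqrt_eq_rpow, Real.sqrt_eq_rpow, ← Real.rpow_mul hd.le]
        norm_num
      · have ha32 : a * Real.sqrt a = a ^ ((3:ℝ)/2) := by
          rw [show ((3:ℝ)/2) = 1 + 1/2 by norm_num, Real.rpow_add ha0, Real.rpow_one,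
            Real.sqrt_eq_rpow]
        rw [ha32, Real.sqrt_eq_rpow, ← Real.rpow_mul ha0.le]
        norm_num

    have e2 : Real.sqrt (4 * (a*b)) = 2 * Real.sqrt (a*b) := by
      rw [Real.sqrt_mul (by norm_num), show (4:ℝ) = 2^2 by norm_num, Real.sqrt_sq (by norm_num)]
    rw [← e1, ← e2]
    exact Real.sqrt_le_sqrt key
  -- conclude
  have hpos : 0 < d ^ ((1:ℝ)/4) * a ^ ((3:ℝ)/4) := by positivity
  have hsq : 0 < Real.sqrt (a*b) := Real.sqrt_pos.mpr (by positivity)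
  have final : 1 / Real.sqrt (a*b) ≤ 2 / (d ^ ((1:ℝ)/4) * a ^ ((3:ℝ)/4)) := by
    rw [div_le_div_iff₀ hsq hpos]
    nlinarith [key2]
  calc 1 / Real.sqrt (a*b) ≤ 2 / (d ^ ((1:ℝ)/4) * a ^ ((3:ℝ)/4)) := final
    _ = 2 * d ^ (-(1/4):ℝ) * a ^ (-(3/4):ℝ) := by
        rw [Real.rpow_neg hd.le, Real.rpow_neg ha0.le, div_eq_mul_inv, mul_inv]
        norm_num
        ring

lemma pt {a b d : ℝ} (ha : 1 ≤ a) (hb : 1 ≤ b) (hd : 0 < d) (hdab : d ≤ a + b) :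
    1 / Real.sqrt (a*b) ≤ 2 * d ^ (-(1/4):ℝ) * (a ^ (-(3/4):ℝ) + b ^ (-(3/4):ℝ)) := by
  have h2 : (0:ℝ) ≤ 2 * d ^ (-(1/4):ℝ) := by positivity
  rcases le_total a b with hab | hab
  · have := pt_aux ha hab hd (by linarith)
    have hb' : (0:ℝ) ≤ b ^ (-(3/4):ℝ) := by positivity
    nlinarith [this]
  · have := pt_aux hb hab hd (by linarith)
    rw [mul_comm a b]
    have ha' : (0:ℝ) ≤ a ^ (-(3/4):ℝ) := by positivity
    nlinarith [this]







lemma one_le_abs_nat {i k : ℕ} (h : i ≠ k) : 1 ≤ |(i:ℝ) - k| := by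
  have hne : (i:ℤ) - k ≠ 0 := by omega
  have h1 : (1:ℤ) ≤ |(i:ℤ) - k| := Int.one_le_abs hne
  have h2 : ((1:ℤ):ℝ) ≤ ((|(i:ℤ) - k| : ℤ) : ℝ) := by exact_mod_cast h1
  rw [Int.cast_abs] at h2
  push_cast at h2
  exact h2

lemma rpow_sq {x : ℝ} (hx : 0 ≤ x) (p : ℝ) : (x ^ p) ^ 2 = x ^ (p * 2) := by
  rw [← Real.rpow_natCast (x ^ p) 2, ← Real.rpow_mul hx]
  norm_num

theorem kurtosis_sum_estimate :
    ∃ C : ℝ, 0 < C ∧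
      ∀ n : ℕ, 2 ≤ n →
        ∑ i ∈ Finset.Icc 1 n, ∑ j ∈ Finset.Icc 1 n,
          (if i ≠ j then
            (∑ k ∈ Finset.Icc 1 n,
              if k ≠ i ∧ k ≠ j then
                1 / Real.sqrt (|(i : ℝ) - k| * |(j : ℝ) - k|)
              else 0) ^ 2
          else 0) ≤ C * (n : ℝ) ^ 2 := by
  refine ⟨4096, by norm_num, ?_⟩
  intro n hn
  have hn0 : (0:ℝ) < n := by positivity  -- fix below if needed
  set P : ℝ := (n:ℝ) ^ ((1:ℝ)/2) with hP
  have hPpos : 0 < P := by positivity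
  have hPP : P * P = (n:ℝ) := by
    rw [hP, ← Real.rpow_add hn0]; norm_num
  have hconv34 : ∀ x:ℝ, x ^ ((1/4:ℝ) - 1) = x ^ (-(3/4):ℝ) := by intro x; norm_num
  have hconv12 : ∀ x:ℝ, x ^ ((1/2:ℝ) - 1) = x ^ (-(1/2):ℝ) := by intro x; norm_num
  -- inner sum bound
  have inner_bound : ∀ i ∈ Finset.Icc 1 n, ∀ j ∈ Finset.Icc 1 n, i ≠ j →
      (∑ k ∈ Finset.Icc 1 n,
        if k ≠ i ∧ k ≠ j then 1 / Real.sqrt (|(i:ℝ) - k| * |(j:ℝ) - k|) else 0)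
      ≤ 32 * |(i:ℝ) - j| ^ (-(1/4):ℝ) * (n:ℝ) ^ ((1:ℝ)/4) := by
    intro i hi j hj hij
    simp only [Finset.mem_Icc] at hi hj
    have hd : 0 < |(i:ℝ) - j| := lt_of_lt_of_le one_pos (one_le_abs_nat hij)
    have hd' : (0:ℝ) ≤ 2 * |(i:ℝ) - j| ^ (-(1/4):ℝ) := by positivity
    have step1 : ∀ k ∈ Finset.Icc 1 n,
        (if k ≠ i ∧ k ≠ j then 1 / Real.sqrt (|(i:ℝ) - k| * |(j:ℝ) - k|) else 0)
        ≤ 2 * |(i:ℝ) - j| ^ (-(1/4):ℝ) *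
          ((if k ≠ i then |(i:ℝ) - k| ^ (-(3/4):ℝ) else 0)
            + (if k ≠ j then |(j:ℝ) - k| ^ (-(3/4):ℝ) else 0)) := by
      intro k hk
      by_cases h : k ≠ i ∧ k ≠ j
      · rw [if_pos h, if_pos h.1, if_pos h.2]
        apply pt (one_le_abs_nat (Ne.symm h.1)) (one_le_abs_nat (Ne.symm h.2)) hd
        calc |(i:ℝ) - j| ≤ |(i:ℝ) - k| + |(k:ℝ) - j| := abs_sub_le _ _ _
          _ = |(i:ℝ) - k| + |(j:ℝ) - k| := by rw [abs_sub_comm (k:ℝ)]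
      · rw [if_neg h]
        have h1 : (0:ℝ) ≤ (if k ≠ i then |(i:ℝ) - k| ^ (-(3/4):ℝ) else 0) := by positivity
        have h2 : (0:ℝ) ≤ (if k ≠ j then |(j:ℝ) - k| ^ (-(3/4):ℝ) else 0) := by positivity
        positivity
    have hA : ∑ k ∈ Finset.Icc 1 n, (if k ≠ i then |(i:ℝ) - k| ^ (-(3/4):ℝ) else 0)
        ≤ 8 * (n:ℝ) ^ ((1:ℝ)/4) := by
      have := sumB (c := (1/4:ℝ)) (by norm_num) (by norm_num) hi.1 hi.2
      simp only [hconv34] at this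
      calc _ ≤ 2 * ((n:ℝ) ^ (1/4:ℝ) / (1/4:ℝ)) := this
        _ = 8 * (n:ℝ) ^ ((1:ℝ)/4) := by ring
    have hB : ∑ k ∈ Finset.Icc 1 n, (if k ≠ j then |(j:ℝ) - k| ^ (-(3/4):ℝ) else 0)
        ≤ 8 * (n:ℝ) ^ ((1:ℝ)/4) := by
      have := sumB (c := (1/4:ℝ)) (by norm_num) (by norm_num) hj.1 hj.2
      simp only [hconv34] at this
      calc _ ≤ 2 * ((n:ℝ) ^ (1/4:ℝ) / (1/4:ℝ)) := this
        _ = 8 * (n:ℝ) ^ ((1:ℝ)/4) := by ring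
    calc (∑ k ∈ Finset.Icc 1 n,
        if k ≠ i ∧ k ≠ j then 1 / Real.sqrt (|(i:ℝ) - k| * |(j:ℝ) - k|) else 0)
        ≤ ∑ k ∈ Finset.Icc 1 n, (2 * |(i:ℝ) - j| ^ (-(1/4):ℝ) *
            ((if k ≠ i then |(i:ℝ) - k| ^ (-(3/4):ℝ) else 0)
              + (if k ≠ j then |(j:ℝ) - k| ^ (-(3/4):ℝ) else 0))) :=
          Finset.sum_le_sum step1
      _ = 2 * |(i:ℝ) - j| ^ (-(1/4):ℝ) *
            ((∑ k ∈ Finset.Icc 1 n, (if k ≠ i then |(i:ℝ) - k| ^ (-(3/4):ℝ) else 0))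
              + ∑ k ∈ Finset.Icc 1 n, (if k ≠ j then |(j:ℝ) - k| ^ (-(3/4):ℝ) else 0)) := by
          rw [← Finset.mul_sum, Finset.sum_add_distrib]
      _ ≤ 2 * |(i:ℝ) - j| ^ (-(1/4):ℝ) * (8 * (n:ℝ) ^ ((1:ℝ)/4) + 8 * (n:ℝ) ^ ((1:ℝ)/4)) := by
          apply mul_le_mul_of_nonneg_left _ hd'
          linarith
      _ = 32 * |(i:ℝ) - j| ^ (-(1/4):ℝ) * (n:ℝ) ^ ((1:ℝ)/4) := by ring
  -- outer sum
  have row_bound : ∀ i ∈ Finset.Icc 1 n,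
      (∑ j ∈ Finset.Icc 1 n,
        (if i ≠ j then
          (∑ k ∈ Finset.Icc 1 n,
            if k ≠ i ∧ k ≠ j then 1 / Real.sqrt (|(i:ℝ) - k| * |(j:ℝ) - k|) else 0) ^ 2
        else 0)) ≤ 4096 * (n:ℝ) := by
    intro i hi
    have hi' := hi
    simp only [Finset.mem_Icc] at hi'
    have sq_bound : ∀ j ∈ Finset.Icc 1 n,
        (if i ≠ j then
          (∑ k ∈ Finset.Icc 1 n,
            if k ≠ i ∧ k ≠ j then 1 / Real.sqrt (|(i:ℝ) - k| * |(j:ℝ) - k|) else 0) ^ 2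
        else 0)
        ≤ 1024 * P * (if j ≠ i then |(i:ℝ) - j| ^ (-(1/2):ℝ) else 0) := by
      intro j hj
      by_cases hij : i ≠ j
      · rw [if_pos hij, if_pos (Ne.symm hij)]
        have hd : 0 < |(i:ℝ) - j| := lt_of_lt_of_le one_pos (one_le_abs_nat hij)
        have hS0 : (0:ℝ) ≤ ∑ k ∈ Finset.Icc 1 n,
            (if k ≠ i ∧ k ≠ j then 1 / Real.sqrt (|(i:ℝ) - k| * |(j:ℝ) - k|) else 0) := by
          apply Finset.sum_nonneg
          intro k _
          by_cases h : k ≠ i ∧ k ≠ j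
          · rw [if_pos h]; positivity
          · rw [if_neg h]
        have h1 := pow_le_pow_left₀ hS0 (inner_bound i hi j hj hij) 2
        calc (∑ k ∈ Finset.Icc 1 n,
            if k ≠ i ∧ k ≠ j then 1 / Real.sqrt (|(i:ℝ) - k| * |(j:ℝ) - k|) else 0) ^ 2
            ≤ (32 * |(i:ℝ) - j| ^ (-(1/4):ℝ) * (n:ℝ) ^ ((1:ℝ)/4)) ^ 2 := h1
          _ = 1024 * P * |(i:ℝ) - j| ^ (-(1/2):ℝ) := by
              rw [mul_pow, mul_pow, rpow_sq (abs_nonneg _), rpow_sq hn0.le]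
              rw [show (-(1/4):ℝ) * 2 = -(1/2) by norm_num,
                show ((1:ℝ)/4) * 2 = (1:ℝ)/2 by norm_num]
              ring
      · rw [if_neg hij, if_neg (fun h => hij (Ne.symm h))]
        simp
    calc (∑ j ∈ Finset.Icc 1 n,
        (if i ≠ j then
          (∑ k ∈ Finset.Icc 1 n,
            if k ≠ i ∧ k ≠ j then 1 / Real.sqrt (|(i:ℝ) - k| * |(j:ℝ) - k|) else 0) ^ 2
        else 0))
        ≤ ∑ j ∈ Finset.Icc 1 n,
            1024 * P * (if j ≠ i then |(i:ℝ) - j| ^ (-(1/2):ℝ) else 0) :=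
          Finset.sum_le_sum sq_bound
      _ = 1024 * P * ∑ j ∈ Finset.Icc 1 n,
            (if j ≠ i then |(i:ℝ) - j| ^ (-(1/2):ℝ) else 0) := by
          rw [← Finset.mul_sum]
      _ ≤ 1024 * P * (4 * P) := by
          apply mul_le_mul_of_nonneg_left _ (by positivity)
          have := sumB (c := (1/2:ℝ)) (by norm_num) (by norm_num) hi'.1 hi'.2
          simp only [hconv12] at this
          calc _ ≤ 2 * ((n:ℝ) ^ (1/2:ℝ) / (1/2:ℝ)) := this
            _ = 4 * P := by rw [hP]; ring
      _ = 4096 * (P * P) := by ring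
      _ = 4096 * (n:ℝ) := by rw [hPP]
  calc ∑ i ∈ Finset.Icc 1 n, ∑ j ∈ Finset.Icc 1 n,
        (if i ≠ j then
          (∑ k ∈ Finset.Icc 1 n,
            if k ≠ i ∧ k ≠ j then 1 / Real.sqrt (|(i:ℝ) - k| * |(j:ℝ) - k|) else 0) ^ 2
        else 0)
      ≤ ∑ i ∈ Finset.Icc 1 n, 4096 * (n:ℝ) := Finset.sum_le_sum row_bound
    _ = (Finset.Icc 1 n).card * (4096 * (n:ℝ)) := by rw [Finset.sum_const, nsmul_eq_mul]
    _ = n * (4096 * (n:ℝ)) := by rw [Nat.card_Icc]; norm_num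
    _ = 4096 * (n:ℝ) ^ 2 := by ring
end
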